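/- arXiv:1408.1903 — 2 statements merged into one kernel-verified Lean document; each statement's English description precedes it below -/
import Mathlib

section
/- Let M be a Wall form with stable rank r̄(M) ≥ 4 + d, where d = d(H). Then the complex L(M) is connected: any two Wall form morphisms f, f' : W → M can be joined by a finite sequence f = f_0, f_1, …, f_n = f' of morphisms W → M in which the images of consecutive morphisms are orthogonal sub-Wall forms of M. -/
/-!
Framework: `H`-pairs and Wall forms, following N. Perlmutter,
"Homological stability for the moduli spaces of products of spheres".

A form parameter `(G, ∂, π, ε)` is recorded together with the two
compatibility identities `∂(ε•h) = ∂(h)` and `π(∂(h)) = h + ε•h`, which hold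
in the geometric situation considered in the paper and which are exactly the
conditions needed for the standard Wall forms `W^g` to exist.
-/

section HPairs

/-- An `H`-pair: a pair of abelian groups together with a ℤ-bilinear
(i.e. biadditive) map `τ : M₋ × H → M₊`. -/
structure HPair (H : Type) [AddCommGroup H] where
  Neg : Type
  Pos : Type
  [negGrp : AddCommGroup Neg]
  [posGrp : AddCommGroup Pos]
  tau : Neg →+ H →+ Pos

attribute [instance] HPair.negGrp HPair.posGrp

variable {H : Type} [AddCommGroup H]

/-- An `H`-map of `H`-pairs. -/
structure HPairHom (M N : HPair H) where
  neg : M.Neg →+ N.Neg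
  pos : M.Pos →+ N.Pos
  comm : ∀ x h, pos (M.tau x h) = N.tau (neg x) h

/-- An isomorphism of `H`-pairs. -/
structure HPairIso (M N : HPair H) where
  toHom : HPairHom M N
  invHom : HPairHom N M
  left_neg : ∀ x, invHom.neg (toHom.neg x) = x
  right_neg : ∀ x, toHom.neg (invHom.neg x) = x
  left_pos : ∀ y, invHom.pos (toHom.pos y) = y
  right_pos : ∀ y, toHom.pos (invHom.pos y) = y

/-- An `H`-pair is finitely generated if both component groups are. -/
def HPair.FG (M : HPair H) : Prop :=
  AddGroup.FG M.Neg ∧ AddGroup.FG M.Pos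

/-- The componentwise direct sum of two `H`-pairs. -/
@[reducible] def HPair.sum (M N : HPair H) : HPair H where
  Neg := M.Neg × N.Neg
  Pos := M.Pos × N.Pos
  tau :=
    { toFun := fun x => (M.tau x.1).prod (N.tau x.2)
      map_zero' := by
        refine AddMonoidHom.ext fun h => ?_
        simp [Prod.ext_iff]
      map_add' := by
        intro x y
        refine AddMonoidHom.ext fun h => ?_
        simp [Prod.ext_iff] }

/-- The left inclusion `M → M ⊕ N`. -/
def HPairHom.inl (M N : HPair H) : HPairHom M (M.sum N) where
  neg := AddMonoidHom.inl M.Neg N.Neg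
  pos := AddMonoidHom.inl M.Pos N.Pos
  comm := by
    intro x h
    simp [HPair.sum, Prod.ext_iff]

/-- The right inclusion `N → M ⊕ N`. -/
def HPairHom.inr (M N : HPair H) : HPairHom N (M.sum N) where
  neg := AddMonoidHom.inr M.Neg N.Neg
  pos := AddMonoidHom.inr M.Pos N.Pos
  comm := by
    intro x h
    simp [HPair.sum, Prod.ext_iff]

/-- The `H`-pair `P⁰`, with `P⁰₋ = 0`, `P⁰₊ = ℤ` and `τ = 0`. -/
def P0 (H : Type) [AddCommGroup H] : HPair H where
  Neg := PUnit
  Pos := ℤ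
  tau := 0

/-- The `H`-pair `P¹`, with `P¹₋ = ℤ`, `P¹₊ = H` and `τ(t, h) = t • h`. -/
def P1 (H : Type) [AddCommGroup H] : HPair H where
  Neg := ℤ
  Pos := H
  tau := zmultiplesHom (H →+ H) (AddMonoidHom.id H)

/-- The generating-set length `d(H)`: the minimal `k` such that there is a
surjection `ℤ^k → H`. -/
noncomputable def dlen (H : Type) [AddCommGroup H] : ℕ :=
  sInf { k : ℕ | ∃ φ : (Fin k → ℤ) →+ H, Function.Surjective φ }

end HPairs

section WallForms

variable {H : Type} [AddCommGroup H]

/-- A form parameter `(G, ∂, π, ε)` for the category of `H`-pairs.  The two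
compatibility identities `bd_eps` and `pi_bd` hold in the geometric setting of
the paper and are needed for the standard Wall forms to exist. -/
structure FormParameter (H : Type) [AddCommGroup H] where
  G : HPair H
  bd : H →+ G.Pos
  pi : G.Pos →+ H
  eps : ℤ
  eps_pm : eps = 1 ∨ eps = -1
  bd_eps : ∀ h : H, bd (eps • h) = bd h
  pi_bd : ∀ h : H, pi (bd h) = h + eps • h

variable {P : FormParameter H}

/-- A Wall form structure (with parameter `P`) on the `H`-pair `C`. -/
structure WallAux (P : FormParameter H) (C : HPair H) where
  lam : C.Neg →+ C.Pos →+ ℤ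
  mu : C.Pos →+ C.Pos →+ H
  alphaNeg : C.Neg →+ P.G.Neg
  alphaPos : C.Pos → P.G.Pos
  mu_symm : ∀ y y', mu y y' = P.eps • mu y' y
  lam_tau : ∀ x x' h, lam x (C.tau x' h) = 0
  mu_tau : ∀ x h y, mu (C.tau x h) y = lam x y • h
  alphaPos_add : ∀ y y', alphaPos (y + y') = alphaPos y + alphaPos y' + P.bd (mu y y')
  mu_diag : ∀ y, mu y y = P.pi (alphaPos y)
  alphaPos_tau : ∀ x h, alphaPos (C.tau x h) = P.G.tau (alphaNeg x) h

/-- A Wall form with parameter `P`: a finitely generated `H`-pair together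
with a Wall form structure. -/
structure WallForm (P : FormParameter H) where
  carrier : HPair H
  fgNeg : AddGroup.FG carrier.Neg
  fgPos : AddGroup.FG carrier.Pos
  str : WallAux P carrier

/-- The property of an `H`-map to preserve all values of `λ`, `μ`, `α₋`, `α₊`. -/
def IsWallHom {C D : HPair H} (S : WallAux P C) (T : WallAux P D)
    (f : HPairHom C D) : Prop :=
  (∀ x y, T.lam (f.neg x) (f.pos y) = S.lam x y) ∧
  (∀ y y', T.mu (f.pos y) (f.pos y') = S.mu y y') ∧
  (∀ x, T.alphaNeg (f.neg x) = S.alphaNeg x) ∧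
  (∀ y, T.alphaPos (f.pos y) = S.alphaPos y)

/-- A morphism of Wall forms. -/
structure WallHom (M N : WallForm P) where
  hom : HPairHom M.carrier N.carrier
  isWall : IsWallHom M.str N.str hom

/-- An isomorphism of Wall forms: a morphism with a two-sided inverse morphism. -/
structure WallIso (M N : WallForm P) where
  toHom : WallHom M N
  invHom : WallHom N M
  left_neg : ∀ x, invHom.hom.neg (toHom.hom.neg x) = x
  right_neg : ∀ x, toHom.hom.neg (invHom.hom.neg x) = x
  left_pos : ∀ y, invHom.hom.pos (toHom.hom.pos y) = y
  right_pos : ∀ y, toHom.hom.pos (invHom.hom.pos y) = y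

end WallForms
section Extra

variable {H : Type} [AddCommGroup H] {P : FormParameter H}

/-- A subgroup of a finitely generated abelian group is finitely generated. -/
theorem addGroup_fg_subgroup {A : Type} [AddCommGroup A] (hA : AddGroup.FG A)
    (S : AddSubgroup A) : AddGroup.FG S := by
  haveI : Module.Finite ℤ A := Module.Finite.iff_addGroup_fg.mpr hA
  haveI : IsNoetherian ℤ A := isNoetherian_of_isNoetherianRing_of_finite ℤ A
  have h : (AddSubgroup.toIntSubmodule S).FG := IsNoetherian.noetherian _
  have h2 : Module.Finite ℤ (AddSubgroup.toIntSubmodule S) := Module.Finite.iff_fg.mpr h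
  exact Module.Finite.iff_addGroup_fg.mp h2

theorem addGroup_fg_of_module_finite {A : Type} [AddCommGroup A]
    [Module.Finite ℤ A] : AddGroup.FG A :=
  Module.Finite.iff_addGroup_fg.mp inferInstance

end Extra

section StdWall

variable {H : Type} [AddCommGroup H]

/-- The underlying `H`-pair of the standard Wall form of rank `g`:
`W^g₋ = ℤ^g` and `W^g₊ = ℤ^g × H^g`  (the first factor records the
`b`-coordinates, the second the `τ(a_i, -)`-coordinates). -/
@[reducible] def stdPair (H : Type) [AddCommGroup H] (g : ℕ) : HPair H where
  Neg := Fin g → ℤ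
  Pos := (Fin g → ℤ) × (Fin g → H)
  tau :=
    { toFun := fun x =>
        { toFun := fun h => (0, fun i => x i • h)
          map_zero' := by
            refine Prod.ext rfl ?_
            funext i
            simp
          map_add' := by
            intro h h'
            refine Prod.ext (by simp) ?_
            funext i
            simp [smul_add] }
      map_zero' := by
        refine AddMonoidHom.ext fun h => ?_
        refine Prod.ext rfl ?_
        funext i
        simp
      map_add' := by
        intro x x'
        refine AddMonoidHom.ext fun h => ?_
        refine Prod.ext (by simp) ?_
        funext i
        simp [add_smul] }

variable (P : FormParameter H)

/-- The standard Wall form `W^g` of rank `g` with parameter `P`. -/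
def stdWall [AddGroup.FG H] (g : ℕ) : WallForm P where
  carrier := stdPair H g
  fgNeg := by
    have : Module.Finite ℤ (Fin g → ℤ) := inferInstance
    exact addGroup_fg_of_module_finite
  fgPos := by
    haveI : Module.Finite ℤ H := Module.Finite.iff_addGroup_fg.mpr ‹AddGroup.FG H›
    have : Module.Finite ℤ ((Fin g → ℤ) × (Fin g → H)) := inferInstance
    exact addGroup_fg_of_module_finite
  str :=
    { lam :=
        { toFun := fun x =>
            { toFun := fun w => ∑ i, x i * w.1 i
              map_zero' := by simp
              map_add' := by
                intro w w'
                simp [mul_add, Finset.sum_add_distrib] }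
          map_zero' := by
            refine AddMonoidHom.ext fun w => ?_
            show (∑ i, (0 : Fin g → ℤ) i * w.1 i) = 0
            simp
          map_add' := by
            intro x x'
            refine AddMonoidHom.ext fun w => ?_
            simp [add_mul, Finset.sum_add_distrib] }
      mu :=
        { toFun := fun w =>
            { toFun := fun w' => (∑ i, w'.1 i • w.2 i) + P.eps • ∑ i, w.1 i • w'.2 i
              map_zero' := by simp
              map_add' := by
                intro w' w''
                simp only [Prod.fst_add, Prod.snd_add, Pi.add_apply, add_smul, smul_add,
                  Finset.sum_add_distrib]
                abel }
          map_zero' := by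
            refine AddMonoidHom.ext fun w' => ?_
            simp
          map_add' := by
            intro w w'
            refine AddMonoidHom.ext fun w'' => ?_
            simp only [Prod.fst_add, Prod.snd_add, Pi.add_apply, add_smul, smul_add,
              Finset.sum_add_distrib, AddMonoidHom.coe_mk, ZeroHom.coe_mk,
              AddMonoidHom.add_apply]
            abel }
      alphaNeg := 0
      alphaPos := fun w => P.bd (∑ i, w.1 i • w.2 i)
      mu_symm := by
        intro y y'
        have he : P.eps * P.eps = 1 := by
          rcases P.eps_pm with h | h <;> simp [h]
        show (∑ i, y'.1 i • y.2 i) + P.eps • ∑ i, y.1 i • y'.2 i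
            = P.eps • ((∑ i, y.1 i • y'.2 i) + P.eps • ∑ i, y'.1 i • y.2 i)
        rw [smul_add, smul_smul, he, one_smul, add_comm]
      lam_tau := by
        intro x x' h
        show (∑ i, x i * (0 : Fin _ → ℤ) i) = 0
        simp
      mu_tau := by
        intro x h y
        show (∑ i, y.1 i • (fun i => x i • h) i) + P.eps • ∑ i, (0 : Fin _ → ℤ) i • y.2 i
            = (∑ i, x i * y.1 i) • h
        simp only [Pi.zero_apply, zero_smul, Finset.sum_const_zero, smul_zero, add_zero]
        rw [Finset.sum_smul]
        congr 1
        funext i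
        rw [smul_smul, mul_comm]
      alphaPos_add := by
        intro y y'
        show P.bd (∑ i, (y.1 i + y'.1 i) • (y.2 i + y'.2 i))
            = P.bd (∑ i, y.1 i • y.2 i) + P.bd (∑ i, y'.1 i • y'.2 i)
              + P.bd ((∑ i, y'.1 i • y.2 i) + P.eps • ∑ i, y.1 i • y'.2 i)
        have expand : ∀ i : Fin _, (y.1 i + y'.1 i) • (y.2 i + y'.2 i)
            = (y.1 i • y.2 i + y'.1 i • y'.2 i) + (y'.1 i • y.2 i + y.1 i • y'.2 i) := by
          intro i
          rw [add_smul, smul_add, smul_add]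
          abel
        rw [Finset.sum_congr rfl fun i _ => expand i, Finset.sum_add_distrib,
          Finset.sum_add_distrib, Finset.sum_add_distrib, map_add, map_add, map_add, map_add,
          P.bd_eps]
      mu_diag := by
        intro y
        show (∑ i, y.1 i • y.2 i) + P.eps • ∑ i, y.1 i • y.2 i
            = P.pi (P.bd (∑ i, y.1 i • y.2 i))
        rw [P.pi_bd]
      alphaPos_tau := by
        intro x h
        show P.bd (∑ i, (0 : Fin _ → ℤ) i • (fun i => x i • h) i) = P.G.tau ((0 : _ →+ _) x) h
        simp }

variable {P}

/-- The `i`-th standard generator `a_i ∈ W^g₋`. -/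
def stdA [AddGroup.FG H] {g : ℕ} (i : Fin g) : (stdWall P g).carrier.Neg :=
  Pi.single i 1

/-- The `i`-th standard generator `b_i ∈ W^g₊`. -/
def stdB [AddGroup.FG H] {g : ℕ} (i : Fin g) : (stdWall P g).carrier.Pos :=
  (Pi.single i 1, 0)

end StdWall
section SubPairs

variable {H : Type} [AddCommGroup H] {P : FormParameter H}

/-- A sub-`H`-pair of the `H`-pair `C`. -/
structure SubPair (C : HPair H) where
  neg : AddSubgroup C.Neg
  pos : AddSubgroup C.Pos
  tau_mem : ∀ x ∈ neg, ∀ h, C.tau x h ∈ pos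

/-- The componentwise intersection of two sub-`H`-pairs. -/
def SubPair.inf {C : HPair H} (N N' : SubPair C) : SubPair C where
  neg := N.neg ⊓ N'.neg
  pos := N.pos ⊓ N'.pos
  tau_mem := fun x hx h => ⟨N.tau_mem x hx.1 h, N'.tau_mem x hx.2 h⟩

/-- The image of an `H`-map, as a sub-`H`-pair of the codomain. -/
def HPairHom.rangeSub {C D : HPair H} (f : HPairHom C D) : SubPair D where
  neg := f.neg.range
  pos := f.pos.range
  tau_mem := by
    rintro x ⟨a, rfl⟩ h
    exact ⟨C.tau a h, f.comm a h⟩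

/-- The kernel of an `H`-map, as a sub-`H`-pair of the domain. -/
def HPairHom.kerSub {C D : HPair H} (f : HPairHom C D) : SubPair C where
  neg := f.neg.ker
  pos := f.pos.ker
  tau_mem := by
    intro x hx h
    have hx' : f.neg x = 0 := hx
    have h2 : f.pos (C.tau x h) = D.tau (f.neg x) h := f.comm x h
    rw [hx'] at h2
    have h3 : f.pos (C.tau x h) = 0 := by
      rw [h2, map_zero, AddMonoidHom.zero_apply]
    exact h3

/-- The orthogonal complement of a sub-`H`-pair, with respect to a Wall form
structure `S` on the ambient `H`-pair. -/
def SubPair.perp {C : HPair H} (S : WallAux P C) (N : SubPair C) : SubPair C where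
  neg :=
    { carrier := { x | ∀ w ∈ N.pos, S.lam x w = 0 }
      add_mem' := by
        intro a b ha hb w hw
        rw [map_add, AddMonoidHom.add_apply, ha w hw, hb w hw, add_zero]
      zero_mem' := by
        intro w hw
        rw [map_zero, AddMonoidHom.zero_apply]
      neg_mem' := by
        intro a ha w hw
        rw [map_neg, AddMonoidHom.neg_apply, ha w hw, neg_zero] }
  pos :=
    { carrier := { y | (∀ v ∈ N.neg, S.lam v y = 0) ∧ ∀ w ∈ N.pos, S.mu y w = 0 }
      add_mem' := by
        intro a b ha hb
        refine ⟨fun v hv => ?_, fun w hw => ?_⟩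
        · rw [map_add, ha.1 v hv, hb.1 v hv, add_zero]
        · rw [map_add, AddMonoidHom.add_apply, ha.2 w hw, hb.2 w hw, add_zero]
      zero_mem' := by
        refine ⟨fun v hv => ?_, fun w hw => ?_⟩
        · rw [map_zero]
        · rw [map_zero, AddMonoidHom.zero_apply]
      neg_mem' := by
        intro a ha
        refine ⟨fun v hv => ?_, fun w hw => ?_⟩
        · rw [map_neg, ha.1 v hv, neg_zero]
        · rw [map_neg, AddMonoidHom.neg_apply, ha.2 w hw, neg_zero] }
  tau_mem := by
    intro x hx h
    refine ⟨fun v hv => S.lam_tau v x h, fun w hw => ?_⟩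
    rw [S.mu_tau x h w, hx w hw, zero_smul]

/-- Orthogonality of two sub-`H`-pairs with respect to a Wall form structure
`S`: trivial intersection and mutual containment in orthogonal complements. -/
def OrthogonalIn {C : HPair H} (S : WallAux P C) (N N' : SubPair C) : Prop :=
  N.neg ⊓ N'.neg = ⊥ ∧ N.pos ⊓ N'.pos = ⊥ ∧
  N.neg ≤ (N'.perp S).neg ∧ N.pos ≤ (N'.perp S).pos ∧
  N'.neg ≤ (N.perp S).neg ∧ N'.pos ≤ (N.perp S).pos

/-- The underlying `H`-pair of a sub-`H`-pair. -/
@[reducible] def SubPair.toPair {C : HPair H} (N : SubPair C) : HPair H where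
  Neg := N.neg
  Pos := N.pos
  tau :=
    { toFun := fun x =>
        { toFun := fun h => ⟨C.tau x h, N.tau_mem x x.2 h⟩
          map_zero' := by
            apply Subtype.ext
            simp
          map_add' := by
            intro h h'
            apply Subtype.ext
            simp }
      map_zero' := by
        refine AddMonoidHom.ext fun h => ?_
        apply Subtype.ext
        simp
      map_add' := by
        intro x x'
        refine AddMonoidHom.ext fun h => ?_
        apply Subtype.ext
        simp }

/-- The restriction of a Wall form structure to a sub-`H`-pair. -/
def SubPair.restrict {C : HPair H} (S : WallAux P C) (N : SubPair C) :
    WallAux P N.toPair where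
  lam :=
    { toFun := fun x => (S.lam (x : C.Neg)).comp N.pos.subtype
      map_zero' := by
        refine AddMonoidHom.ext fun y => ?_
        simp
      map_add' := by
        intro x x'
        refine AddMonoidHom.ext fun y => ?_
        simp }
  mu :=
    { toFun := fun y => (S.mu (y : C.Pos)).comp N.pos.subtype
      map_zero' := by
        refine AddMonoidHom.ext fun y => ?_
        simp
      map_add' := by
        intro y y'
        refine AddMonoidHom.ext fun y'' => ?_
        simp }
  alphaNeg := S.alphaNeg.comp N.neg.subtype
  alphaPos := fun y => S.alphaPos (y : C.Pos)
  mu_symm := fun y y' => S.mu_symm (y : C.Pos) y'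
  lam_tau := fun x x' h => S.lam_tau (x : C.Neg) x' h
  mu_tau := fun x h y => S.mu_tau (x : C.Neg) h y
  alphaPos_add := fun y y' => S.alphaPos_add (y : C.Pos) y'
  mu_diag := fun y => S.mu_diag (y : C.Pos)
  alphaPos_tau := fun x h => S.alphaPos_tau (x : C.Neg) h

/-- A sub-`H`-pair of (the carrier of) a Wall form is itself a Wall form, via
the restricted structure maps. -/
def SubPair.toWall {M : WallForm P} (N : SubPair M.carrier) : WallForm P where
  carrier := N.toPair
  fgNeg := addGroup_fg_subgroup M.fgNeg N.neg
  fgPos := addGroup_fg_subgroup M.fgPos N.pos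
  str := N.restrict M.str

end SubPairs
section SumAndRank

variable {H : Type} [AddCommGroup H] {P : FormParameter H}

/-- The orthogonal direct sum of two Wall forms. -/
def WallForm.sum (M N : WallForm P) : WallForm P where
  carrier := M.carrier.sum N.carrier
  fgNeg := by
    haveI : Module.Finite ℤ M.carrier.Neg := Module.Finite.iff_addGroup_fg.mpr M.fgNeg
    haveI : Module.Finite ℤ N.carrier.Neg := Module.Finite.iff_addGroup_fg.mpr N.fgNeg
    have : Module.Finite ℤ (M.carrier.Neg × N.carrier.Neg) := inferInstance
    exact Module.Finite.iff_addGroup_fg.mp this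
  fgPos := by
    haveI : Module.Finite ℤ M.carrier.Pos := Module.Finite.iff_addGroup_fg.mpr M.fgPos
    haveI : Module.Finite ℤ N.carrier.Pos := Module.Finite.iff_addGroup_fg.mpr N.fgPos
    have : Module.Finite ℤ (M.carrier.Pos × N.carrier.Pos) := inferInstance
    exact Module.Finite.iff_addGroup_fg.mp this
  str :=
    { lam :=
        { toFun := fun x => (M.str.lam x.1).coprod (N.str.lam x.2)
          map_zero' := by
            refine AddMonoidHom.ext fun y => ?_
            simp
          map_add' := by
            intro x x'
            refine AddMonoidHom.ext fun y => ?_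
            simp
            abel }
      mu :=
        { toFun := fun y => (M.str.mu y.1).coprod (N.str.mu y.2)
          map_zero' := by
            refine AddMonoidHom.ext fun y' => ?_
            simp
          map_add' := by
            intro y y'
            refine AddMonoidHom.ext fun y'' => ?_
            simp
            abel }
      alphaNeg := (M.str.alphaNeg).coprod (N.str.alphaNeg)
      alphaPos := fun y => M.str.alphaPos y.1 + N.str.alphaPos y.2
      mu_symm := by
        intro y y'
        show M.str.mu y.1 y'.1 + N.str.mu y.2 y'.2
            = P.eps • (M.str.mu y'.1 y.1 + N.str.mu y'.2 y.2)
        rw [smul_add, M.str.mu_symm y.1 y'.1, N.str.mu_symm y.2 y'.2]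
      lam_tau := by
        intro x x' h
        show M.str.lam x.1 (M.carrier.tau x'.1 h) + N.str.lam x.2 (N.carrier.tau x'.2 h) = 0
        rw [M.str.lam_tau, N.str.lam_tau, add_zero]
      mu_tau := by
        intro x h y
        show M.str.mu (M.carrier.tau x.1 h) y.1 + N.str.mu (N.carrier.tau x.2 h) y.2
            = (M.str.lam x.1 y.1 + N.str.lam x.2 y.2) • h
        rw [M.str.mu_tau, N.str.mu_tau, add_smul]
      alphaPos_add := by
        intro y y'
        show M.str.alphaPos (y.1 + y'.1) + N.str.alphaPos (y.2 + y'.2)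
            = (M.str.alphaPos y.1 + N.str.alphaPos y.2)
              + (M.str.alphaPos y'.1 + N.str.alphaPos y'.2)
              + P.bd (M.str.mu y.1 y'.1 + N.str.mu y.2 y'.2)
        rw [M.str.alphaPos_add, N.str.alphaPos_add, map_add]
        abel
      mu_diag := by
        intro y
        show M.str.mu y.1 y.1 + N.str.mu y.2 y.2
            = P.pi (M.str.alphaPos y.1 + N.str.alphaPos y.2)
        rw [map_add, M.str.mu_diag, N.str.mu_diag]
      alphaPos_tau := by
        intro x h
        show M.str.alphaPos (M.carrier.tau x.1 h) + N.str.alphaPos (N.carrier.tau x.2 h)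
            = P.G.tau (M.str.alphaNeg x.1 + N.str.alphaNeg x.2) h
        rw [M.str.alphaPos_tau, N.str.alphaPos_tau, map_add, AddMonoidHom.add_apply] }

variable [AddGroup.FG H]

/-- `rankGE M g` expresses the inequality `r(M) ≥ g` for the rank of a Wall
form: there exists a morphism of Wall forms `W^g → M`. -/
def rankGE (M : WallForm P) (g : ℕ) : Prop :=
  Nonempty (WallHom (stdWall P g) M)

/-- `srankGE M g` expresses the inequality `r̄(M) ≥ g` for the stable rank of
a Wall form: `r(M ⊕ W^j) ≥ g + j` for some `j`. -/
def srankGE (M : WallForm P) (g : ℕ) : Prop :=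
  ∃ j : ℕ, rankGE (M.sum (stdWall P j)) (g + j)

end SumAndRank

section Duality

variable {H : Type} [AddCommGroup H] {P : FormParameter H}

/-- The duality map `T⁰ : M₋ → Hom(M, P⁰)` of a Wall form. -/
def dualT0 (M : WallForm P) (v : M.carrier.Neg) : HPairHom M.carrier (P0 H) where
  neg := 0
  pos := M.str.lam v
  comm := by
    intro x h
    show M.str.lam v (M.carrier.tau x h) = ((P0 H).tau 0) h
    rw [M.str.lam_tau]
    show (0 : ℤ) = ((0 : _ →+ (H →+ ℤ)) 0) h
    rfl

/-- The duality map `T¹ : M₊ → Hom(M, P¹)` of a Wall form. -/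
def dualT1 (M : WallForm P) (w : M.carrier.Pos) : HPairHom M.carrier (P1 H) where
  neg := M.str.lam.flip w
  pos := M.str.mu.flip w
  comm := by
    intro x h
    show M.str.mu (M.carrier.tau x h) w = (P1 H).tau (M.str.lam x w) h
    rw [M.str.mu_tau]
    show M.str.lam x w • h = (M.str.lam x w • AddMonoidHom.id H) h
    simp

end Duality

attribute [reducible] WallForm.sum stdWall

section Statement17Aux

open Finset

variable {H : Type} [AddCommGroup H] {P : FormParameter H} {C : HPair H}

namespace Stmt17

variable (S : WallAux P C)

/-! ### Bilinearity helpers -/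

lemma lam_addl (x x' : C.Neg) (y : C.Pos) :
    S.lam (x + x') y = S.lam x y + S.lam x' y := map_add (S.lam.flip y) x x'

lemma lam_subl (x x' : C.Neg) (y : C.Pos) :
    S.lam (x - x') y = S.lam x y - S.lam x' y := map_sub (S.lam.flip y) x x'

lemma lam_smull (a : ℤ) (x : C.Neg) (y : C.Pos) :
    S.lam (a • x) y = a • S.lam x y := map_zsmul (S.lam.flip y) a x

lemma lam_zerol (y : C.Pos) : S.lam 0 y = 0 := map_zero (S.lam.flip y)

lemma mu_addl (x x' y : C.Pos) :
    S.mu (x + x') y = S.mu x y + S.mu x' y := map_add (S.mu.flip y) x x'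

lemma mu_subl (x x' y : C.Pos) :
    S.mu (x - x') y = S.mu x y - S.mu x' y := map_sub (S.mu.flip y) x x'

lemma mu_smull (a : ℤ) (x y : C.Pos) :
    S.mu (a • x) y = a • S.mu x y := map_zsmul (S.mu.flip y) a x

lemma mu_zerol (y : C.Pos) : S.mu 0 y = 0 := map_zero (S.mu.flip y)

lemma mu_taur (x : C.Neg) (h : H) (y : C.Pos) :
    S.mu y (C.tau x h) = P.eps • (S.lam x y • h) := by
  rw [S.mu_symm, S.mu_tau]

lemma mu_symm_zero {y y' : C.Pos} (h : S.mu y y' = 0) : S.mu y' y = 0 := by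
  rw [S.mu_symm, h, smul_zero]

/-! ### alphaPos helpers -/

lemma alphaPos_zero : S.alphaPos 0 = 0 := by
  have h := S.alphaPos_add 0 0
  simp only [add_zero, map_zero, AddMonoidHom.zero_apply] at h
  exact add_eq_left.mp h.symm

lemma alphaPos_add0 {y y' : C.Pos} (hy : S.alphaPos y = 0) (hy' : S.alphaPos y' = 0)
    (hm : S.mu y y' = 0) : S.alphaPos (y + y') = 0 := by
  rw [S.alphaPos_add, hy, hy', hm, map_zero, add_zero, add_zero]

lemma alphaPos_neg0 {y : C.Pos} (hmu : S.mu y y = 0) (hy : S.alphaPos y = 0) :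
    S.alphaPos (-y) = 0 := by
  have h := S.alphaPos_add y (-y)
  rw [add_neg_cancel, alphaPos_zero, hy, map_neg, hmu] at h
  simpa using h.symm

lemma alphaPos_smul0 {y : C.Pos} (hmu : S.mu y y = 0) (hy : S.alphaPos y = 0) (a : ℤ) :
    S.alphaPos (a • y) = 0 := by
  induction a using Int.induction_on with
  | zero => simpa using alphaPos_zero S
  | succ k ih =>
    have : ((k : ℤ) + 1) • y = (k : ℤ) • y + y := by rw [add_smul, one_smul]
    rw [this]
    refine alphaPos_add0 S ih hy ?_
    rw [mu_smull, hmu, smul_zero]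
  | pred k ih =>
    have : (-(k : ℤ) - 1) • y = (-(k : ℤ)) • y + (-y) := by
      rw [sub_smul, one_smul, sub_eq_add_neg]
    rw [this]
    refine alphaPos_add0 S ih (alphaPos_neg0 S hmu hy) ?_
    rw [mu_smull, map_neg, hmu, neg_zero, smul_zero]

lemma alphaPos_tau0 {z : C.Neg} (hz : S.alphaNeg z = 0) (h : H) :
    S.alphaPos (C.tau z h) = 0 := by
  rw [S.alphaPos_tau, hz, map_zero, AddMonoidHom.zero_apply]

/-! ### Hyperbolic pairs -/

structure Hyp (S : WallAux P C) where
  z : C.Neg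
  w : C.Pos
  hzw : S.lam z w = 1
  hww : S.mu w w = 0
  hz : S.alphaNeg z = 0
  hw : S.alphaPos w = 0

variable {S}

def Orth (p q : Hyp S) : Prop :=
  S.lam p.z q.w = 0 ∧ S.lam q.z p.w = 0 ∧ S.mu p.w q.w = 0

lemma Orth.symm' {p q : Hyp S} (h : Orth p q) : Orth q p :=
  ⟨h.2.1, h.1, mu_symm_zero S h.2.2⟩

def Fam {n : ℕ} (c : Fin n → Hyp S) : Prop :=
  ∀ i j, i ≠ j → Orth (c i) (c j)

lemma fam_comp {n m : ℕ} {c : Fin n → Hyp S} (hF : Fam c) {u : Fin m → Fin n}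
    (hu : Function.Injective u) : Fam (c ∘ u) :=
  fun i j hij => hF _ _ (fun h => hij (hu h))

end Stmt17

end Statement17Aux
namespace Stmt17

variable {H : Type} [AddCommGroup H] {P : FormParameter H} {C : HPair H}
variable {S : WallAux P C}

/-- The elementary move: `Y i ← Y i + a • Y j`, `X j ← X j - a • X i`. -/
lemma moveM4 {n : ℕ} (c : Fin n → Hyp S) (hF : Fam c) (i j : Fin n) (hij : i ≠ j) (a : ℤ) :
    ∃ c' : Fin n → Hyp S, Fam c' ∧
      (∀ T : Hyp S, (∀ l, Orth (c l) T) → ∀ l, Orth (c' l) T) ∧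
      ((c' i).w = (c i).w + a • (c j).w) ∧
      (∀ l, l ≠ i → (c' l).w = (c l).w) := by
  obtain ⟨hij1, hij2, hij3⟩ := hF i j hij
  have hji3 : S.mu (c j).w (c i).w = 0 := mu_symm_zero S hij3
  have h1 : S.lam (c i).z ((c i).w + a • (c j).w) = 1 := by
    rw [map_add, map_zsmul, (c i).hzw, hij1, smul_zero, add_zero]
  have h2 : S.mu ((c i).w + a • (c j).w) ((c i).w + a • (c j).w) = 0 := by
    rw [mu_addl, mu_smull, map_add, map_add, map_zsmul, map_zsmul,
      (c i).hww, (c j).hww, hij3, hji3]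
    simp
  have h3 : S.alphaPos ((c i).w + a • (c j).w) = 0 := by
    refine alphaPos_add0 S (c i).hw (alphaPos_smul0 S (c j).hww (c j).hw a) ?_
    rw [map_zsmul, hij3, smul_zero]
  have h4 : S.lam ((c j).z - a • (c i).z) (c j).w = 1 := by
    rw [lam_subl, lam_smull, (c j).hzw, hij1, smul_zero, sub_zero]
  have h5 : S.alphaNeg ((c j).z - a • (c i).z) = 0 := by
    rw [map_sub, map_zsmul, (c j).hz, (c i).hz, smul_zero, sub_zero]
  set pi' : Hyp S := ⟨(c i).z, (c i).w + a • (c j).w, h1, h2, (c i).hz, h3⟩ with hpi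
  set pj' : Hyp S := ⟨(c j).z - a • (c i).z, (c j).w, h4, (c j).hww, h5, (c j).hw⟩ with hpj
  have Aij : Orth pi' pj' := by
    refine ⟨hij1, ?_, ?_⟩
    · show S.lam ((c j).z - a • (c i).z) ((c i).w + a • (c j).w) = 0
      rw [lam_subl, lam_smull, map_add, map_add, map_zsmul, map_zsmul,
        (c j).hzw, (c i).hzw, hij1, hij2]
      simp
    · show S.mu ((c i).w + a • (c j).w) (c j).w = 0
      rw [mu_addl, mu_smull, hij3, (c j).hww, smul_zero, add_zero]
  have Bi : ∀ m, m ≠ i → m ≠ j → Orth pi' (c m) := by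
    intro m hmi hmj
    obtain ⟨him1, him2, him3⟩ := hF i m (Ne.symm hmi)
    obtain ⟨hjm1, hjm2, hjm3⟩ := hF j m (Ne.symm hmj)
    refine ⟨him1, ?_, ?_⟩
    · show S.lam (c m).z ((c i).w + a • (c j).w) = 0
      rw [map_add, map_zsmul, him2, hjm2, smul_zero, add_zero]
    · show S.mu ((c i).w + a • (c j).w) (c m).w = 0
      rw [mu_addl, mu_smull, him3, hjm3, smul_zero, add_zero]
  have Bj : ∀ m, m ≠ i → m ≠ j → Orth pj' (c m) := by
    intro m hmi hmj
    obtain ⟨him1, him2, him3⟩ := hF i m (Ne.symm hmi)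
    obtain ⟨hjm1, hjm2, hjm3⟩ := hF j m (Ne.symm hmj)
    refine ⟨?_, hjm2, hjm3⟩
    show S.lam ((c j).z - a • (c i).z) (c m).w = 0
    rw [lam_subl, lam_smull, hjm1, him1, smul_zero, sub_zero]
  set c' : Fin n → Hyp S := fun l => if l = i then pi' else if l = j then pj' else c l with hc'
  have ci : c' i = pi' := by simp [hc']
  have cj : c' j = pj' := by simp [hc', Ne.symm hij]
  have co : ∀ l, l ≠ i → l ≠ j → c' l = c l := fun l u v => by simp [hc', u, v]
  refine ⟨c', ?_, ?_, ?_, ?_⟩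
  · intro l m hlm
    rcases eq_or_ne l i with hli | hli
    · rcases eq_or_ne m j with hmj | hmj
      · rw [hli, hmj, ci, cj]; exact Aij
      · have hmi : m ≠ i := fun h => hlm (hli.trans h.symm)
        rw [hli, ci, co m hmi hmj]
        exact Bi m hmi hmj
    · rcases eq_or_ne l j with hlj | hlj
      · rcases eq_or_ne m i with hmi | hmi
        · rw [hlj, hmi, cj, ci]; exact Aij.symm'
        · have hmj : m ≠ j := fun h => hlm (hlj.trans h.symm)
          rw [hlj, cj, co m hmi hmj]
          exact Bj m hmi hmj
      · rcases eq_or_ne m i with hmi | hmi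
        · rw [hmi, co l hli hlj, ci]
          exact (Bi l hli hlj).symm'
        · rcases eq_or_ne m j with hmj | hmj
          · rw [hmj, co l hli hlj, cj]
            exact (Bj l hli hlj).symm'
          · rw [co l hli hlj, co m hmi hmj]; exact hF l m hlm
  · intro T hT l
    obtain ⟨hi1, hi2, hi3⟩ := hT i
    obtain ⟨hj1, hj2, hj3⟩ := hT j
    rcases eq_or_ne l i with hli | hli
    · rw [hli, ci]
      refine ⟨hi1, ?_, ?_⟩
      · show S.lam T.z ((c i).w + a • (c j).w) = 0
        rw [map_add, map_zsmul, hi2, hj2, smul_zero, add_zero]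
      · show S.mu ((c i).w + a • (c j).w) T.w = 0
        rw [mu_addl, mu_smull, hi3, hj3, smul_zero, add_zero]
    · rcases eq_or_ne l j with hlj | hlj
      · rw [hlj, cj]
        refine ⟨?_, hj2, hj3⟩
        show S.lam ((c j).z - a • (c i).z) T.w = 0
        rw [lam_subl, lam_smull, hj1, hi1, smul_zero, sub_zero]
      · rw [co l hli hlj]; exact hT l
  · rw [ci]
  · intro l hl
    rcases eq_or_ne l j with hlj | hlj
    · rw [hlj, cj]
    · rw [co l hl hlj]

end Stmt17
namespace Stmt17

variable {H : Type} [AddCommGroup H] {P : FormParameter H} {C : HPair H}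
variable {S : WallAux P C}

lemma natAbs_emod_lt' (a b : ℤ) (hb : b ≠ 0) : (a % b).natAbs < b.natAbs := by
  have h1 := Int.emod_nonneg a hb
  have h2 := Int.emod_lt a hb
  omega

lemma emod_eq_add (a b : ℤ) : a + (-(a / b)) • b = a % b := by
  rw [smul_eq_mul, Int.emod_def]; ring

/-- The Euclidean-algorithm phase: make `λ(e, Y l) = 0` for all `l ≠ 0`. -/
lemma euclid (e : C.Neg) :
    ∀ (B : ℕ) {n : ℕ} (c : Fin (n + 1) → Hyp S), Fam c →
      (∑ l ∈ Finset.univ.erase (0 : Fin (n+1)), (S.lam e (c l).w).natAbs) ≤ B →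
      ∃ c' : Fin (n+1) → Hyp S, Fam c' ∧
        (∀ T : Hyp S, (∀ l, Orth (c l) T) → ∀ l, Orth (c' l) T) ∧
        (∀ l, l ≠ 0 → S.lam e (c' l).w = 0) := by
  intro B
  induction B with
  | zero =>
    intro n c hF hm
    refine ⟨c, hF, fun T h => h, fun l hl => ?_⟩
    have hmem : l ∈ Finset.univ.erase (0 : Fin (n+1)) :=
      Finset.mem_erase.mpr ⟨hl, Finset.mem_univ l⟩
    have h0 := Finset.sum_eq_zero_iff.mp (Nat.le_zero.mp hm) l hmem
    omega
  | succ B ih =>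
    intro n c hF hm
    by_cases h0 : ∀ l, l ≠ (0 : Fin (n+1)) → S.lam e (c l).w = 0
    · exact ⟨c, hF, fun T h => h, h0⟩
    · push_neg at h0
      obtain ⟨l, hl0, hl⟩ := h0
      have key : ∀ (c₁ : Fin (n+1) → Hyp S) (i : Fin (n+1)), i ≠ 0 →
          (∀ m, m ≠ i → m ≠ 0 → (c₁ m).w = (c m).w) →
          (S.lam e (c₁ i).w).natAbs < (S.lam e (c i).w).natAbs →
          (∑ r ∈ Finset.univ.erase (0 : Fin (n+1)), (S.lam e (c₁ r).w).natAbs) <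
            (∑ r ∈ Finset.univ.erase (0 : Fin (n+1)), (S.lam e (c r).w).natAbs) := by
        intro c₁ i hi hsame hlt
        refine Finset.sum_lt_sum (fun m hm => ?_) ⟨i, Finset.mem_erase.mpr ⟨hi, Finset.mem_univ i⟩, hlt⟩
        rcases eq_or_ne m i with hmi | hmi
        · rw [hmi]; exact hlt.le
        · rw [hsame m hmi (Finset.mem_erase.mp hm).1]
      suffices hstep : ∃ c₁ : Fin (n+1) → Hyp S, Fam c₁ ∧
          (∀ T : Hyp S, (∀ r, Orth (c r) T) → ∀ r, Orth (c₁ r) T) ∧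
          (∑ r ∈ Finset.univ.erase (0 : Fin (n+1)), (S.lam e (c₁ r).w).natAbs) <
            (∑ r ∈ Finset.univ.erase (0 : Fin (n+1)), (S.lam e (c r).w).natAbs) by
        obtain ⟨c₁, hF₁, pres₁, hlt⟩ := hstep
        obtain ⟨c', hF', pres', hz⟩ := ih c₁ hF₁ (by omega)
        exact ⟨c', hF', fun T hT => pres' T (pres₁ T hT), hz⟩
      by_cases hA : ∃ m, m ≠ (0 : Fin (n+1)) ∧ m ≠ l ∧ S.lam e (c m).w ≠ 0
      · obtain ⟨m, hm0, hml, hm⟩ := hA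
        rcases le_total (S.lam e (c l).w).natAbs (S.lam e (c m).w).natAbs with hle | hle
        · obtain ⟨c₁, hF₁, pres₁, hwi, hwo⟩ :=
            moveM4 c hF m l hml (-(S.lam e (c m).w / S.lam e (c l).w))
          refine ⟨c₁, hF₁, pres₁, key c₁ m hm0 (fun r hr _ => hwo r hr) ?_⟩
          rw [hwi, map_add, map_zsmul, smul_eq_mul, ← smul_eq_mul, emod_eq_add]
          exact lt_of_lt_of_le (natAbs_emod_lt' _ _ hl) hle
        · obtain ⟨c₁, hF₁, pres₁, hwi, hwo⟩ :=
            moveM4 c hF l m (Ne.symm hml) (-(S.lam e (c l).w / S.lam e (c m).w))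
          refine ⟨c₁, hF₁, pres₁, key c₁ l hl0 (fun r hr _ => hwo r hr) ?_⟩
          rw [hwi, map_add, map_zsmul, smul_eq_mul, ← smul_eq_mul, emod_eq_add]
          exact lt_of_lt_of_le (natAbs_emod_lt' _ _ hm) hle
      · push_neg at hA
        obtain ⟨c₁, hF₁, pres₁, hw1, hwo1⟩ :=
          moveM4 c hF 0 l (Ne.symm hl0) (-(S.lam e (c 0).w / S.lam e (c l).w))
        have hc1l : (c₁ l).w = (c l).w := hwo1 l hl0
        have ht10 : S.lam e (c₁ 0).w = S.lam e (c 0).w % S.lam e (c l).w := by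
          rw [hw1, map_add, map_zsmul, smul_eq_mul, ← smul_eq_mul, emod_eq_add]
        by_cases h10 : S.lam e (c₁ 0).w = 0
        · obtain ⟨c₂, hF₂, pres₂, hw2, hwo2⟩ := moveM4 c₁ hF₁ 0 l (Ne.symm hl0) 1
          obtain ⟨c₃, hF₃, pres₃, hw3, hwo3⟩ := moveM4 c₂ hF₂ l 0 hl0 (-1)
          refine ⟨c₃, hF₃, fun T hT => pres₃ T (pres₂ T (pres₁ T hT)),
            key c₃ l hl0 (fun r hrl hr0 => ?_) ?_⟩
          · rw [hwo3 r hrl, hwo2 r hr0, hwo1 r hr0]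
          · have hval : S.lam e (c₃ l).w = 0 := by
              rw [hw3, map_add, map_zsmul, hwo2 l hl0, hc1l, hw2, hc1l, map_add,
                map_zsmul, h10]
              simp
            rw [hval]
            simpa using Int.natAbs_pos.mpr hl
        · obtain ⟨c₂, hF₂, pres₂, hw2, hwo2⟩ :=
            moveM4 c₁ hF₁ l 0 hl0 (-(S.lam e (c₁ l).w / S.lam e (c₁ 0).w))
          refine ⟨c₂, hF₂, fun T hT => pres₂ T (pres₁ T hT),
            key c₂ l hl0 (fun r hrl hr0 => by rw [hwo2 r hrl, hwo1 r hr0]) ?_⟩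
          have hval : S.lam e (c₂ l).w = S.lam e (c₁ l).w % S.lam e (c₁ 0).w := by
            rw [hw2, map_add, map_zsmul, smul_eq_mul, ← smul_eq_mul, emod_eq_add]
          rw [hval]
          refine lt_trans (natAbs_emod_lt' _ _ h10) ?_
          rw [ht10]
          exact natAbs_emod_lt' _ _ hl

/-- Phase 2 and 3: make every pair orthogonal to `p`, assuming `λ(p.z, Y l) = 0`. -/
lemma phi23 (p : Hyp S) {n : ℕ} (c : Fin n → Hyp S) (hF : Fam c)
    (ht : ∀ l, S.lam p.z (c l).w = 0) :
    ∃ c' : Fin n → Hyp S, Fam c' ∧ (∀ l, Orth (c' l) p) ∧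
      (∀ T : Hyp S, (∀ l, Orth (c l) T) → S.lam p.z T.w = 0 → ∀ l, Orth (c' l) T) := by
  have hz1 : S.lam p.z p.w = 1 := p.hzw
  -- new components
  have hzw' : ∀ l, S.lam ((c l).z - S.lam (c l).z p.w • p.z)
      ((c l).w + C.tau p.z (-(S.mu (c l).w p.w))) = 1 := by
    intro l
    simp [lam_subl, lam_smull, map_add, S.lam_tau, (c l).hzw, ht l]
  have hww' : ∀ l m, S.mu ((c l).w + C.tau p.z (-(S.mu (c l).w p.w)))
      ((c m).w + C.tau p.z (-(S.mu (c m).w p.w))) = S.mu (c l).w (c m).w := by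
    intro l m
    simp [mu_addl, map_add, S.mu_tau, mu_taur, S.lam_tau, ht l, ht m]
  have hzz' : ∀ l, S.alphaNeg ((c l).z - S.lam (c l).z p.w • p.z) = 0 := by
    intro l
    rw [map_sub, map_zsmul, (c l).hz, p.hz, smul_zero, sub_zero]
  have hw' : ∀ l, S.alphaPos ((c l).w + C.tau p.z (-(S.mu (c l).w p.w))) = 0 := by
    intro l
    refine alphaPos_add0 S (c l).hw (alphaPos_tau0 S p.hz _) ?_
    rw [mu_taur, ht l]
    simp
  set c' : Fin n → Hyp S := fun l =>
    ⟨(c l).z - S.lam (c l).z p.w • p.z, (c l).w + C.tau p.z (-(S.mu (c l).w p.w)),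
      hzw' l, by rw [hww' l l]; exact (c l).hww, hzz' l, hw' l⟩ with hc'
  have cz : ∀ l, (c' l).z = (c l).z - S.lam (c l).z p.w • p.z := fun l => rfl
  have cw : ∀ l, (c' l).w = (c l).w + C.tau p.z (-(S.mu (c l).w p.w)) := fun l => rfl
  refine ⟨c', ?_, ?_, ?_⟩
  · intro l m hlm
    obtain ⟨o1, o2, o3⟩ := hF l m hlm
    refine ⟨?_, ?_, ?_⟩
    · simp [cz, cw, lam_subl, lam_smull, map_add, S.lam_tau, o1, ht m]
    · simp [cz, cw, lam_subl, lam_smull, map_add, S.lam_tau, o2, ht l]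
    · rw [cw, cw, hww' l m]; exact o3
  · intro l
    refine ⟨?_, ?_, ?_⟩
    · simp [cz, lam_subl, lam_smull, hz1]
    · rw [cw, map_add, S.lam_tau, ht l, add_zero]
    · simp [cw, mu_addl, S.mu_tau, hz1]
  · intro T hT htz l
    obtain ⟨o1, o2, o3⟩ := hT l
    refine ⟨?_, ?_, ?_⟩
    · simp [cz, lam_subl, lam_smull, map_add, S.lam_tau, o1, htz]
    · rw [cw, map_add, S.lam_tau, o2, add_zero]
    · simp [cw, mu_addl, S.mu_tau, o3, htz]

/-- The master lemma: sacrifice one hyperbolic pair to make the rest orthogonal to `p`. -/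
lemma masterLemma {m : ℕ} (c : Fin (m + 1) → Hyp S) (hF : Fam c) (p : Hyp S) :
    ∃ c' : Fin m → Hyp S, Fam c' ∧ (∀ l, Orth (c' l) p) ∧
      (∀ T : Hyp S, (∀ l, Orth (c l) T) → S.lam p.z T.w = 0 → ∀ l, Orth (c' l) T) := by
  obtain ⟨c₁, hF₁, pres₁, ht₁⟩ := euclid p.z _ c hF le_rfl
  obtain ⟨c', hF', hOp, pres'⟩ :=
    phi23 p (c₁ ∘ Fin.succ) (fam_comp hF₁ (Fin.succ_injective m))
      (fun l => ht₁ _ (Fin.succ_ne_zero l))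
  exact ⟨c', hF', hOp,
    fun T hT hz => pres' T (fun l => pres₁ T hT _) hz⟩

/-- Strip off a list of pairs: make all remaining pairs orthogonal to everything in `L`. -/
lemma strip : ∀ (L : List (Hyp S)), L.Pairwise Orth →
    ∀ {n : ℕ} (c : Fin (n + L.length) → Hyp S), Fam c →
    ∃ c' : Fin n → Hyp S, Fam c' ∧ (∀ p ∈ L, ∀ l, Orth (c' l) p) ∧
      (∀ T : Hyp S, (∀ l, Orth (c l) T) → (∀ q ∈ L, S.lam q.z T.w = 0) →
        ∀ l, Orth (c' l) T) := by
  intro L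
  induction L with
  | nil =>
    intro _ n c hF
    exact ⟨c, hF, by simp, fun T hT _ => hT⟩
  | cons p L ih =>
    intro hL n c hF
    obtain ⟨c₁, hF₁, hOp, pres₁⟩ := masterLemma (m := n + L.length) c hF p
    obtain ⟨c', hF', hLp, pres'⟩ := ih (List.pairwise_cons.mp hL).2 c₁ hF₁
    refine ⟨c', hF', ?_, ?_⟩
    · intro q hq l
      rcases List.mem_cons.mp hq with rfl | hq
      · exact pres' q hOp (fun r hr => ((List.pairwise_cons.mp hL).1 r hr).2.1) l
      · exact hLp q hq l
    · intro T hT hQ l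
      exact pres' T (pres₁ T hT (hQ p List.mem_cons_self))
        (fun q hq => hQ q (List.mem_cons.mpr (Or.inr hq))) l

end Stmt17
namespace Stmt17

variable {H : Type} [AddCommGroup H] {P : FormParameter H}

/-! ### Computation lemmas for standard Wall forms and sums -/

section Std

variable [AddGroup.FG H]

@[simp] lemma stdWall_lam {g : ℕ} (x : (stdWall P g).carrier.Neg)
    (w : (stdWall P g).carrier.Pos) :
    (stdWall P g).str.lam x w = ∑ i, x i * w.1 i := rfl

@[simp] lemma stdWall_mu {g : ℕ} (w w' : (stdWall P g).carrier.Pos) :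
    (stdWall P g).str.mu w w' = (∑ i, w'.1 i • w.2 i) + P.eps • ∑ i, w.1 i • w'.2 i := rfl

@[simp] lemma stdWall_alphaPos {g : ℕ} (w : (stdWall P g).carrier.Pos) :
    (stdWall P g).str.alphaPos w = P.bd (∑ i, w.1 i • w.2 i) := rfl

@[simp] lemma stdWall_alphaNeg {g : ℕ} (x : (stdWall P g).carrier.Neg) :
    (stdWall P g).str.alphaNeg x = 0 := rfl

@[simp] lemma stdWall_tau {g : ℕ} (x : (stdWall P g).carrier.Neg) (h : H) :
    (stdWall P g).carrier.tau x h = (0, fun i => x i • h) := rfl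

end Std

@[simp] lemma sum_lam (M N : WallForm P) (x : (M.sum N).carrier.Neg)
    (w : (M.sum N).carrier.Pos) :
    (M.sum N).str.lam x w = M.str.lam x.1 w.1 + N.str.lam x.2 w.2 := rfl

@[simp] lemma sum_mu (M N : WallForm P) (w w' : (M.sum N).carrier.Pos) :
    (M.sum N).str.mu w w' = M.str.mu w.1 w'.1 + N.str.mu w.2 w'.2 := rfl

@[simp] lemma sum_alphaPos (M N : WallForm P) (w : (M.sum N).carrier.Pos) :
    (M.sum N).str.alphaPos w = M.str.alphaPos w.1 + N.str.alphaPos w.2 := rfl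

@[simp] lemma sum_alphaNeg (M N : WallForm P) (x : (M.sum N).carrier.Neg) :
    (M.sum N).str.alphaNeg x = M.str.alphaNeg x.1 + N.str.alphaNeg x.2 := rfl

@[simp] lemma sum_tau (M N : WallForm P) (x : (M.sum N).carrier.Neg) (h : H) :
    (M.sum N).carrier.tau x h = (M.carrier.tau x.1 h, N.carrier.tau x.2 h) := rfl

lemma sum_mul_single {g : ℕ} (a : Fin g → ℤ) (t : Fin g) :
    ∑ i, a i * (Pi.single t 1 : Fin g → ℤ) i = a t := by
  simp [Pi.single_apply]

lemma sum_single_mul {g : ℕ} (t : Fin g) (a : Fin g → ℤ) :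
    ∑ i, (Pi.single t 1 : Fin g → ℤ) i * a i = a t := by
  simp [Pi.single_apply]

lemma sum_single_smul {g : ℕ} (t : Fin g) (a : Fin g → H) :
    ∑ i, (Pi.single t (1 : ℤ) : Fin g → ℤ) i • a i = a t := by
  simp [Pi.single_apply, ite_smul]

section Pairs

variable [AddGroup.FG H]

/-- The standard hyperbolic pairs of the `W^j` summand of `M ⊕ W^j`. -/
def ABpair (M : WallForm P) (j : ℕ) (t : Fin j) : Hyp (M.sum (stdWall P j)).str where
  z := (0, Pi.single t 1)
  w := (0, (Pi.single t 1, 0))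
  hzw := by
    simp [lam_zerol, Pi.single_apply]
  hww := by
    simp [mu_zerol]
  hz := by
    simp [map_zero]
  hw := by
    simp [alphaPos_zero]

lemma ABpair_orth {M : WallForm P} {j : ℕ} {t u : Fin j} (h : t ≠ u) :
    Orth (ABpair M j t) (ABpair M j u) := by
  refine ⟨?_, ?_, ?_⟩
  · simp [ABpair, lam_zerol, Pi.single_apply, h, Ne.symm h]
  · simp [ABpair, lam_zerol, Pi.single_apply, h, Ne.symm h]
  · simp [ABpair, mu_zerol]

/-- Embedding a hyperbolic pair of `M` into `M ⊕ K`. -/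
def embedHyp (M K : WallForm P) (p : Hyp M.str) : Hyp (M.sum K).str where
  z := (p.z, 0)
  w := (p.w, 0)
  hzw := by simp [p.hzw, lam_zerol]
  hww := by simp [p.hww, mu_zerol]
  hz := by simp [p.hz]
  hw := by simp [p.hw, alphaPos_zero]

lemma embedHyp_AB_orth (M : WallForm P) (j : ℕ) (p : Hyp M.str) (t : Fin j) :
    Orth (embedHyp M (stdWall P j) p) (ABpair M j t) := by
  refine ⟨?_, ?_, ?_⟩
  · simp [embedHyp, ABpair, lam_zerol]
    exact Finset.sum_eq_zero fun _ _ => zero_mul _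
  · simp [embedHyp, ABpair, lam_zerol]
  · simp [embedHyp, ABpair, mu_zerol]

lemma lam_z_AB (M : WallForm P) (j : ℕ) (p : Hyp M.str) (t : Fin j) :
    (M.sum (stdWall P j)).str.lam (embedHyp M (stdWall P j) p).z (ABpair M j t).w = 0 := by
  simp [embedHyp, ABpair, lam_zerol]
  exact Finset.sum_eq_zero fun _ _ => zero_mul _

/-- A pair orthogonal to all the standard pairs of the `W^j` summand lies in `M`. -/
lemma descend {M : WallForm P} {j : ℕ} (p : Hyp (M.sum (stdWall P j)).str)
    (hp : ∀ t : Fin j, Orth p (ABpair M j t)) :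
    ∃ p' : Hyp M.str, p.z = (p'.z, 0) ∧ p.w = (p'.w, 0) := by
  have hz2' : ∀ t, p.z.2 t = 0 := by
    intro t
    have h := (hp t).1
    simp only [ABpair, sum_lam, stdWall_lam, AddMonoidHom.coe_mk, ZeroHom.coe_mk, AddMonoidHom.coprod_apply] at h
    rw [map_zero, sum_mul_single] at h
    simpa using h
  have hz2 : p.z.2 = 0 := funext hz2'
  have hw21' : ∀ t, p.w.2.1 t = 0 := by
    intro t
    have h := (hp t).2.1
    simp only [ABpair, sum_lam, stdWall_lam, AddMonoidHom.coe_mk, ZeroHom.coe_mk, AddMonoidHom.coprod_apply] at h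
    rw [lam_zerol, sum_single_mul] at h
    simpa using h
  have hw21 : p.w.2.1 = 0 := funext hw21'
  have hw22' : ∀ t, p.w.2.2 t = 0 := by
    intro t
    have h := (hp t).2.2
    simp only [ABpair, sum_mu, stdWall_mu, AddMonoidHom.coe_mk, ZeroHom.coe_mk, AddMonoidHom.coprod_apply] at h
    rw [sum_single_smul] at h
    simp only [mu_zerol, Prod.snd_zero, Pi.zero_apply, smul_zero, Finset.sum_const_zero,
      zero_add, add_zero] at h
    simpa using h
  have hw22 : p.w.2.2 = 0 := funext hw22'
  have hw2 : p.w.2 = 0 := Prod.ext hw21 hw22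
  have e1 : M.str.lam p.z.1 p.w.1 = 1 := by
    have h := p.hzw
    simp only [sum_lam, stdWall_lam, hz2', AddMonoidHom.coe_mk, ZeroHom.coe_mk, AddMonoidHom.coprod_apply, zero_mul,
      Finset.sum_const_zero, add_zero] at h
    exact h
  have e2 : M.str.mu p.w.1 p.w.1 = 0 := by
    have h := p.hww
    simp only [sum_mu, stdWall_mu, hw21', hw22', AddMonoidHom.coe_mk, ZeroHom.coe_mk, AddMonoidHom.coprod_apply, zero_smul, smul_zero,
      Finset.sum_const_zero, add_zero] at h
    exact h
  have e3 : M.str.alphaNeg p.z.1 = 0 := by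
    have h := p.hz
    simp only [sum_alphaNeg, stdWall_alphaNeg] at h
    simpa using h
  have e4 : M.str.alphaPos p.w.1 = 0 := by
    have h := p.hw
    simp only [sum_alphaPos, stdWall_alphaPos, hw21', zero_smul,
      Finset.sum_const_zero, map_zero, add_zero] at h
    exact h
  exact ⟨⟨p.z.1, p.w.1, e1, e2, e3, e4⟩, Prod.ext rfl hz2, Prod.ext rfl hw2⟩

end Pairs

/-! ### Vertices of `L(M)` and hyperbolic pairs -/

section Vertices

variable [AddGroup.FG H]

def oneV : Fin 1 → ℤ := fun _ => 1

def bbV (H : Type) [AddCommGroup H] : (Fin 1 → ℤ) × (Fin 1 → H) := (fun _ => 1, 0)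

/-- The hyperbolic pair associated to a vertex of `L(M)`. -/
def ofHom (M : WallForm P) (g : WallHom (stdWall P 1) M) : Hyp M.str where
  z := g.hom.neg oneV
  w := g.hom.pos (bbV H)
  hzw := by
    have h := g.isWall.1 oneV (bbV H)
    rw [h]
    simp [oneV, bbV]
  hww := by
    have h := g.isWall.2.1 (bbV H) (bbV H)
    rw [h]
    simp [bbV]
  hz := by
    have h := g.isWall.2.2.1 oneV
    rw [h]
    simp
  hw := by
    have h := g.isWall.2.2.2 (bbV H)
    rw [h]
    simp [bbV]

lemma neg_eq {M : WallForm P} (g : WallHom (stdWall P 1) M) (x : Fin 1 → ℤ) :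
    g.hom.neg x = x 0 • (ofHom M g).z := by
  have hx : x = x 0 • oneV := by
    funext i
    have h0 : i = 0 := Subsingleton.elim i 0
    rw [h0]
    simp [oneV]
  conv_lhs => rw [hx]
  rw [map_zsmul]
  rfl

lemma pos_eq {M : WallForm P} (g : WallHom (stdWall P 1) M)
    (y : (Fin 1 → ℤ) × (Fin 1 → H)) :
    g.hom.pos y = y.1 0 • (ofHom M g).w + M.carrier.tau (ofHom M g).z (y.2 0) := by
  have hy : y = y.1 0 • bbV H +
      ((0, fun i => oneV i • y.2 0) : (Fin 1 → ℤ) × (Fin 1 → H)) := by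
    refine Prod.ext ?_ ?_
    · funext i
      have h0 : i = 0 := Subsingleton.elim i 0
      rw [h0]
      simp [bbV, oneV]
    · funext i
      have h0 : i = 0 := Subsingleton.elim i 0
      rw [h0]
      simp [bbV, oneV]
  have htau : ((0, fun i => oneV i • y.2 0) : (Fin 1 → ℤ) × (Fin 1 → H)) =
      (stdWall P 1).carrier.tau oneV (y.2 0) := rfl
  conv_lhs => rw [hy]
  rw [map_add, map_zsmul, htau, g.hom.comm]
  rfl

/-- The criterion for orthogonality of the images of two vertices. -/
lemma orth_range {M : WallForm P} (g₁ g₂ : WallHom (stdWall P 1) M)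
    (h1 : M.str.lam (ofHom M g₁).z (ofHom M g₂).w = 0)
    (h2 : M.str.lam (ofHom M g₂).z (ofHom M g₁).w = 0)
    (h3 : M.str.mu (ofHom M g₁).w (ofHom M g₂).w = 0) :
    OrthogonalIn M.str g₁.hom.rangeSub g₂.hom.rangeSub := by
  have h3' : M.str.mu (ofHom M g₂).w (ofHom M g₁).w = 0 := mu_symm_zero _ h3
  have hp : M.str.lam (ofHom M g₁).z (ofHom M g₁).w = 1 := (ofHom M g₁).hzw
  have hq : M.str.lam (ofHom M g₂).z (ofHom M g₂).w = 1 := (ofHom M g₂).hzw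
  refine ⟨?_, ?_, ?_, ?_, ?_, ?_⟩
  · rw [eq_bot_iff]
    intro u hu
    obtain ⟨⟨x, hx⟩, ⟨x', hx'⟩⟩ := AddSubgroup.mem_inf.mp hu
    rw [neg_eq] at hx hx'
    have e1 : M.str.lam u (ofHom M g₁).w = x 0 := by
      rw [← hx, lam_smull, hp]; simp
    have e2 : M.str.lam u (ofHom M g₁).w = 0 := by
      rw [← hx', lam_smull, h2]; simp
    have hx0 : x 0 = 0 := by rw [← e1, e2]
    rw [AddSubgroup.mem_bot, ← hx, hx0, zero_smul]
  · rw [eq_bot_iff]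
    intro u hu
    obtain ⟨⟨y, hy⟩, ⟨y', hy'⟩⟩ := AddSubgroup.mem_inf.mp hu
    rw [pos_eq] at hy hy'
    have e1 : M.str.lam (ofHom M g₁).z u = y.1 0 := by
      rw [← hy, map_add, map_zsmul, hp, M.str.lam_tau]; simp
    have e2 : M.str.lam (ofHom M g₁).z u = 0 := by
      rw [← hy', map_add, map_zsmul, h1, M.str.lam_tau]; simp
    have e3 : M.str.lam (ofHom M g₂).z u = y'.1 0 := by
      rw [← hy', map_add, map_zsmul, hq, M.str.lam_tau]; simp
    have e4 : M.str.lam (ofHom M g₂).z u = 0 := by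
      rw [← hy, map_add, map_zsmul, h2, M.str.lam_tau]; simp
    have hy0 : y.1 0 = 0 := by rw [← e1, e2]
    have hy'0 : y'.1 0 = 0 := by rw [← e3, e4]
    have hu1 : u = M.carrier.tau (ofHom M g₁).z (y.2 0) := by
      rw [← hy, hy0, zero_smul, zero_add]
    have hu2 : u = M.carrier.tau (ofHom M g₂).z (y'.2 0) := by
      rw [← hy', hy'0, zero_smul, zero_add]
    have e5 : M.str.mu u (ofHom M g₁).w = y.2 0 := by
      rw [hu1, M.str.mu_tau, hp, one_smul]
    have e6 : M.str.mu u (ofHom M g₁).w = 0 := by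
      rw [hu2, M.str.mu_tau, h2, zero_smul]
    have hy20 : y.2 0 = 0 := by rw [← e5, e6]
    rw [AddSubgroup.mem_bot, hu1, hy20, map_zero]
  · rintro u ⟨x, rfl⟩ w ⟨y, rfl⟩
    rw [neg_eq, pos_eq, lam_smull, map_add, map_zsmul, h1, M.str.lam_tau]
    simp
  · rintro u ⟨y, rfl⟩
    constructor
    · rintro v ⟨x, rfl⟩
      rw [neg_eq, pos_eq, lam_smull, map_add, map_zsmul, h2, M.str.lam_tau]
      simp
    · rintro w ⟨y', rfl⟩
      rw [pos_eq g₁, pos_eq g₂]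
      simp [mu_addl, mu_smull, map_add, map_zsmul, M.str.mu_tau, mu_taur,
        M.str.lam_tau, h1, h2, h3]
  · rintro u ⟨x, rfl⟩ w ⟨y, rfl⟩
    rw [neg_eq, pos_eq, lam_smull, map_add, map_zsmul, h2, M.str.lam_tau]
    simp
  · rintro u ⟨y, rfl⟩
    constructor
    · rintro v ⟨x, rfl⟩
      rw [neg_eq, pos_eq, lam_smull, map_add, map_zsmul, h1, M.str.lam_tau]
      simp
    · rintro w ⟨y', rfl⟩
      rw [pos_eq g₂, pos_eq g₁]
      simp [mu_addl, mu_smull, map_add, map_zsmul, M.str.mu_tau, mu_taur,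
        M.str.lam_tau, h1, h2, h3']

end Vertices

end Stmt17
namespace Stmt17

variable {H : Type} [AddCommGroup H] {P : FormParameter H} [AddGroup.FG H]

/-- The vertex of `L(M)` associated to a hyperbolic pair. -/
def toHom (M : WallForm P) (p : Hyp M.str) : WallHom (stdWall P 1) M where
  hom :=
    { neg := AddMonoidHom.mk' (fun x => x 0 • p.z) (by
        intro a b
        show (a + b) 0 • p.z = a 0 • p.z + b 0 • p.z
        have e : (a + b) 0 = a 0 + b 0 := rfl
        rw [e, add_smul])
      pos := AddMonoidHom.mk' (fun y => y.1 0 • p.w + M.carrier.tau p.z (y.2 0)) (by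
        intro a b
        show (a + b).1 0 • p.w + M.carrier.tau p.z ((a + b).2 0) =
          (a.1 0 • p.w + M.carrier.tau p.z (a.2 0)) +
          (b.1 0 • p.w + M.carrier.tau p.z (b.2 0))
        have e1 : (a + b).1 0 = a.1 0 + b.1 0 := rfl
        have e2 : (a + b).2 0 = a.2 0 + b.2 0 := rfl
        rw [e1, e2, add_smul, map_add]
        abel)
      comm := by
        intro x h
        have e1 : ((stdWall P 1).carrier.tau x h).1 0 = 0 := rfl
        have e2 : ((stdWall P 1).carrier.tau x h).2 0 = x 0 • h := rfl
        show ((stdWall P 1).carrier.tau x h).1 0 • p.w +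
            M.carrier.tau p.z (((stdWall P 1).carrier.tau x h).2 0) =
          M.carrier.tau (x 0 • p.z) h
        rw [e1, e2, zero_smul, zero_add, map_zsmul]
        have e3 : M.carrier.tau (x 0 • p.z) = x 0 • M.carrier.tau p.z :=
          map_zsmul _ _ _
        rw [e3]
        rfl }
  isWall := by
    refine ⟨?_, ?_, ?_, ?_⟩
    · intro x y
      show M.str.lam (x 0 • p.z) (y.1 0 • p.w + M.carrier.tau p.z (y.2 0)) =
        (stdWall P 1).str.lam x y
      rw [stdWall_lam, Fin.sum_univ_one]
      rw [lam_smull, map_add, map_zsmul, M.str.lam_tau, p.hzw]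
      simp [smul_eq_mul]
    · intro y y'
      show M.str.mu (y.1 0 • p.w + M.carrier.tau p.z (y.2 0))
          (y'.1 0 • p.w + M.carrier.tau p.z (y'.2 0)) = (stdWall P 1).str.mu y y'
      rw [stdWall_mu, Fin.sum_univ_one, Fin.sum_univ_one]
      rw [mu_addl, mu_smull, map_add, map_add, map_zsmul, map_zsmul,
        M.str.mu_tau, M.str.mu_tau, mu_taur, p.hww, p.hzw, M.str.lam_tau]
      simp only [one_smul, smul_zero, zero_smul, add_zero, zero_add, smul_smul]
      rw [mul_comm (y.1 0) P.eps]
      abel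
    · intro x
      show M.str.alphaNeg (x 0 • p.z) = (stdWall P 1).str.alphaNeg x
      rw [stdWall_alphaNeg, map_zsmul, p.hz, smul_zero]
    · intro y
      show M.str.alphaPos (y.1 0 • p.w + M.carrier.tau p.z (y.2 0)) =
        (stdWall P 1).str.alphaPos y
      rw [stdWall_alphaPos, Fin.sum_univ_one]
      rw [M.str.alphaPos_add, alphaPos_smul0 M.str p.hww p.hw,
        alphaPos_tau0 M.str p.hz, mu_smull, mu_taur, p.hzw, one_smul,
        smul_comm (y.1 0) P.eps (y.2 0), P.bd_eps]
      simp

lemma ofHom_toHom_z (M : WallForm P) (p : Hyp M.str) :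
    (ofHom M (toHom M p)).z = p.z := by
  show oneV 0 • p.z = p.z
  simp [oneV]

lemma ofHom_toHom_w (M : WallForm P) (p : Hyp M.str) :
    (ofHom M (toHom M p)).w = p.w := by
  show (bbV H).1 0 • p.w + M.carrier.tau p.z ((bbV H).2 0) = p.w
  simp [bbV]

end Stmt17
namespace Stmt17

variable {H : Type} [AddCommGroup H] {P : FormParameter H} [AddGroup.FG H]

lemma orth_descend {M : WallForm P} {j : ℕ} {p q : Hyp (M.sum (stdWall P j)).str}
    {p' q' : Hyp M.str} (hpz : p.z = (p'.z, 0)) (hpw : p.w = (p'.w, 0))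
    (hqz : q.z = (q'.z, 0)) (hqw : q.w = (q'.w, 0)) (h : Orth p q) : Orth p' q' := by
  obtain ⟨o1, o2, o3⟩ := h
  rw [hpz, hqw] at o1
  rw [hqz, hpw] at o2
  rw [hpw, hqw] at o3
  refine ⟨?_, ?_, ?_⟩
  · rw [sum_lam] at o1
    rw [lam_zerol] at o1
    simpa using o1
  · rw [sum_lam] at o2
    rw [lam_zerol] at o2
    simpa using o2
  · rw [sum_mu] at o3
    rw [mu_zerol] at o3
    simpa using o3

end Stmt17
open Stmt17 in
/-- If `r̄(M) ≥ 4 + d(H)` then the complex `L(M)` is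
connected: any two morphisms `W → M` are joined by a finite chain of
morphisms in which consecutive ones have orthogonal images. -/
theorem statement_17 {H : Type} [AddCommGroup H] [AddGroup.FG H]
    (P : FormParameter H) (M : WallForm P) (h : srankGE M (4 + dlen H))
    (f f' : WallHom (stdWall P 1) M) :
    Relation.ReflTransGen
      (fun a b : WallHom (stdWall P 1) M =>
        OrthogonalIn M.str a.hom.rangeSub b.hom.rangeSub) f f' := by
  classical
  obtain ⟨j, ⟨φ⟩⟩ := h
  set N := M.sum (stdWall P j) with hN
  -- facts about the image of the standard basis under φ
  have key1 : ∀ i l : Fin (4 + dlen H + j),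
      N.str.lam (φ.hom.neg (Pi.single i 1)) (φ.hom.pos (Pi.single l 1, 0)) =
        if i = l then 1 else 0 := by
    intro i l
    rw [φ.isWall.1, stdWall_lam, sum_single_mul]
    show (Pi.single l (1 : ℤ) : Fin (4 + dlen H + j) → ℤ) i = _
    rw [Pi.single_apply]
  have key2 : ∀ i l : Fin (4 + dlen H + j),
      N.str.mu (φ.hom.pos (Pi.single i 1, 0)) (φ.hom.pos (Pi.single l 1, 0)) = 0 := by
    intro i l
    rw [φ.isWall.2.1, stdWall_mu]
    simp
  have key3 : ∀ i : Fin (4 + dlen H + j),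
      N.str.alphaNeg (φ.hom.neg (Pi.single i 1)) = 0 := by
    intro i
    rw [φ.isWall.2.2.1, stdWall_alphaNeg]
  have key4 : ∀ i : Fin (4 + dlen H + j),
      N.str.alphaPos (φ.hom.pos (Pi.single i 1, 0)) = 0 := by
    intro i
    rw [φ.isWall.2.2.2, stdWall_alphaPos]
    simp
  set c0 : Fin (4 + dlen H + j) → Hyp N.str := fun i =>
    ⟨φ.hom.neg (Pi.single i 1), φ.hom.pos (Pi.single i 1, 0),
      by simpa using key1 i i, key2 i i, key3 i, key4 i⟩ with hc0
  have hF0 : Fam c0 := by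
    intro i l hil
    refine ⟨?_, ?_, ?_⟩
    · simpa [hc0, hil] using key1 i l
    · simpa [hc0, Ne.symm hil] using key1 l i
    · simpa [hc0] using key2 i l
  -- the embedded hyperbolic pairs of the two given vertices
  set pf : Hyp N.str := embedHyp M (stdWall P j) (ofHom M f) with hpf
  set pf' : Hyp N.str := embedHyp M (stdWall P j) (ofHom M f') with hpf'
  -- strip off the W^j-factor and the pair of f
  set L : List (Hyp N.str) := (List.ofFn (ABpair M j)) ++ [pf] with hLdef
  have hLlen : L.length = j + 1 := by simp [hLdef]
  have hLpair : L.Pairwise Orth := by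
    rw [hLdef, List.pairwise_append]
    refine ⟨?_, by simp, ?_⟩
    · rw [List.pairwise_ofFn]
      intro t u htu
      exact ABpair_orth (Fin.ne_of_lt htu)
    · intro a ha b hb
      simp only [List.mem_singleton] at hb
      subst hb
      obtain ⟨t, rfl⟩ := (List.mem_ofFn' _ _).mp ha
      exact (embedHyp_AB_orth M j (ofHom M f) t).symm'
  obtain ⟨F1, hF1, hO1, -⟩ :=
    strip L hLpair (n := 3 + dlen H)
      (fun i => c0 ⟨i.val, by have h2 := i.isLt; omega⟩)
      (fam_comp hF0 (by
        intro a b hab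
        exact Fin.ext (by simpa using congrArg Fin.val hab)))
  have hO1AB : ∀ (t : Fin j) l, Orth (F1 l) (ABpair M j t) := by
    intro t l
    refine hO1 _ ?_ l
    rw [hLdef]
    exact List.mem_append.mpr (Or.inl ((List.mem_ofFn' _ _).mpr ⟨t, rfl⟩))
  have hO1f : ∀ l, Orth (F1 l) pf := by
    intro l
    refine hO1 pf ?_ l
    rw [hLdef]
    exact List.mem_append.mpr (Or.inr (List.mem_singleton.mpr rfl))
  -- Euclidean phase with respect to the pair of f'
  obtain ⟨F2, hF2, pres2, ht2⟩ :=
    euclid pf'.z _ (n := 2 + dlen H)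
      (fun i => F1 ⟨i.val, by have h2 := i.isLt; omega⟩)
      (fam_comp hF1 (by
        intro a b hab
        exact Fin.ext (by simpa using congrArg Fin.val hab)))
      le_rfl
  have hF2AB : ∀ (t : Fin j) l, Orth (F2 l) (ABpair M j t) :=
    fun t => pres2 _ (fun l => hO1AB t _)
  have hF2f : ∀ l, Orth (F2 l) pf := pres2 _ (fun l => hO1f _)
  have h1ne : (⟨1, by omega⟩ : Fin (2 + dlen H + 1)) ≠ 0 :=
    Fin.ne_of_val_ne (by simp)
  set P0 : Hyp N.str := F2 ⟨1, by omega⟩ with hP0def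
  -- final phase with respect to the pair of f'
  obtain ⟨Q', hFQ, hQp, presQ⟩ :=
    phi23 pf' (fun (i : Fin (dlen H + 1)) => F2 ⟨i.val + 2, by have h2 := i.isLt; omega⟩)
      (fam_comp hF2 (by
        intro a b hab
        exact Fin.ext (by simpa using congrArg Fin.val hab)))
      (fun l => ht2 _ (Fin.ne_of_val_ne (by simp)))
  set Q : Hyp N.str := Q' ⟨0, by omega⟩ with hQdef
  have hQf' : Orth Q pf' := hQp _
  have hQP0 : Orth Q P0 := by
    refine presQ P0 (fun l => hF2 _ _ (Fin.ne_of_val_ne (by simp))) (ht2 _ h1ne) _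
  have hQAB : ∀ t : Fin j, Orth Q (ABpair M j t) := by
    intro t
    exact presQ _ (fun l => hF2AB t _) (lam_z_AB M j (ofHom M f') t) _
  have hP0AB : ∀ t : Fin j, Orth P0 (ABpair M j t) := fun t => hF2AB t _
  have hP0f : Orth P0 pf := hF2f _
  -- descend to M
  obtain ⟨p0, hp0z, hp0w⟩ := descend P0 hP0AB
  obtain ⟨q0, hq0z, hq0w⟩ := descend Q hQAB
  have oP0f : Orth p0 (ofHom M f) := orth_descend hp0z hp0w rfl rfl hP0f
  have oQP0 : Orth q0 p0 := orth_descend hq0z hq0w hp0z hp0w hQP0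
  have oQf' : Orth q0 (ofHom M f') := orth_descend hq0z hq0w rfl rfl hQf'
  -- the chain f — p0 — q0 — f'
  have e1 : OrthogonalIn M.str f.hom.rangeSub (toHom M p0).hom.rangeSub := by
    refine orth_range f (toHom M p0) ?_ ?_ ?_
    · rw [ofHom_toHom_w]; exact oP0f.2.1
    · rw [ofHom_toHom_z]; exact oP0f.1
    · rw [ofHom_toHom_w]; exact mu_symm_zero _ oP0f.2.2
  have e2 : OrthogonalIn M.str (toHom M p0).hom.rangeSub (toHom M q0).hom.rangeSub := by
    refine orth_range (toHom M p0) (toHom M q0) ?_ ?_ ?_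
    · rw [ofHom_toHom_z, ofHom_toHom_w]; exact oQP0.2.1
    · rw [ofHom_toHom_z, ofHom_toHom_w]; exact oQP0.1
    · rw [ofHom_toHom_w, ofHom_toHom_w]; exact mu_symm_zero _ oQP0.2.2
  have e3 : OrthogonalIn M.str (toHom M q0).hom.rangeSub f'.hom.rangeSub := by
    refine orth_range (toHom M q0) f' ?_ ?_ ?_
    · rw [ofHom_toHom_z]; exact oQf'.1
    · rw [ofHom_toHom_w]; exact oQf'.2.1
    · rw [ofHom_toHom_w]; exact oQf'.2.2
  exact Relation.ReflTransGen.head e1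
    (Relation.ReflTransGen.head e2 (Relation.ReflTransGen.single e3))
end

section
/- Let M be a Wall form with r(M) ≥ 4 + d, where d = d(H). Then for any two Wall form morphisms h, h₀ : W → M there exists a morphism h' : W → M such that the image of h' is orthogonal to the image of h and also orthogonal to the image of h₀ (i.e., h and h₀ are joined by an edge path of length 2 in L(M)). -/
open Matrix

section Lattice

/-- Dot-product against a fixed vector, as an `AddMonoidHom`. -/
def dotHom {g : ℕ} (d : Fin g → ℤ) : (Fin g → ℤ) →+ ℤ :=
  AddMonoidHom.mk' (fun y => y ⬝ᵥ d) (fun a b => add_dotProduct a b d)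

@[simp] lemma dotHom_apply {g : ℕ} (d y : Fin g → ℤ) : dotHom d y = y ⬝ᵥ d := rfl

lemma addHom_vanish_on_span {A B : Type} [AddCommGroup A] [AddCommGroup B]
    (φ : A →+ B) {s : Set A} (h : ∀ w ∈ s, φ w = 0) :
    ∀ z ∈ Submodule.span ℤ s, φ z = 0 := by
  intro z hz
  induction hz using Submodule.span_induction with
  | mem x hx => exact h x hx
  | zero => simp
  | add x y hx hy ihx ihy => rw [map_add, ihx, ihy, add_zero]
  | smul a x hx ih => rw [map_zsmul, ih, smul_zero]

lemma span_pair_dot_left {g : ℕ} {p q w : Fin g → ℤ} (hp : p ⬝ᵥ w = 0) (hq : q ⬝ᵥ w = 0) :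
    ∀ z ∈ Submodule.span ℤ ({p, q} : Set (Fin g → ℤ)), z ⬝ᵥ w = 0 := by
  refine addHom_vanish_on_span (dotHom w) ?_
  rintro z (rfl | rfl) <;> simpa

lemma span_pair_dot_right {g : ℕ} {p q w : Fin g → ℤ} (hp : w ⬝ᵥ p = 0) (hq : w ⬝ᵥ q = 0) :
    ∀ z ∈ Submodule.span ℤ ({p, q} : Set (Fin g → ℤ)), w ⬝ᵥ z = 0 := by
  refine addHom_vanish_on_span
    (AddMonoidHom.mk' (fun y => w ⬝ᵥ y) (fun a b => dotProduct_add w a b)) ?_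
  rintro z (rfl | rfl) <;> simpa

lemma pair_reduce {g : ℕ} (φ : (Fin g → ℤ) →+ ℤ) :
    ∀ (N : ℕ) (v0 vi x0 xi : Fin g → ℤ),
      (φ vi).natAbs ≤ N →
      x0 ⬝ᵥ v0 = 1 → x0 ⬝ᵥ vi = 0 → xi ⬝ᵥ v0 = 0 → xi ⬝ᵥ vi = 1 →
      ∃ w0 wi z0 zi : Fin g → ℤ,
        (z0 ⬝ᵥ w0 = 1 ∧ z0 ⬝ᵥ wi = 0 ∧ zi ⬝ᵥ w0 = 0 ∧ zi ⬝ᵥ wi = 1) ∧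
        φ wi = 0 ∧
        w0 ∈ Submodule.span ℤ ({v0, vi} : Set (Fin g → ℤ)) ∧
        wi ∈ Submodule.span ℤ ({v0, vi} : Set (Fin g → ℤ)) ∧
        z0 ∈ Submodule.span ℤ ({x0, xi} : Set (Fin g → ℤ)) ∧
        zi ∈ Submodule.span ℤ ({x0, xi} : Set (Fin g → ℤ)) := by
  intro N
  induction N with
  | zero =>
    intro v0 vi x0 xi hN h00 h0i hi0 hii
    have hz : φ vi = 0 := by
      have := Nat.le_zero.mp hN
      exact Int.natAbs_eq_zero.mp this
    exact ⟨v0, vi, x0, xi, ⟨h00, h0i, hi0, hii⟩, hz,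
      Submodule.subset_span (by simp), Submodule.subset_span (by simp),
      Submodule.subset_span (by simp), Submodule.subset_span (by simp)⟩
  | succ N ih =>
    intro v0 vi x0 xi hN h00 h0i hi0 hii
    by_cases hz : φ vi = 0
    · exact ⟨v0, vi, x0, xi, ⟨h00, h0i, hi0, hii⟩, hz,
        Submodule.subset_span (by simp), Submodule.subset_span (by simp),
        Submodule.subset_span (by simp), Submodule.subset_span (by simp)⟩
    · set t : ℤ := φ v0 / φ vi with ht
      have hrem : φ (v0 - t • vi) = φ v0 % φ vi := by
        rw [map_sub, map_zsmul, smul_eq_mul, Int.emod_def, ht]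
        ring
      have hlt : (φ (v0 - t • vi)).natAbs ≤ N := by
        rw [hrem]
        have h1 : 0 ≤ φ v0 % φ vi := Int.emod_nonneg _ hz
        have h2 : φ v0 % φ vi < |φ vi| := Int.emod_lt_abs _ hz
        have h3 : |φ vi| = ((φ vi).natAbs : ℤ) := Int.abs_eq_natAbs _
        have h4 : (φ v0 % φ vi).natAbs < (φ vi).natAbs := by
          omega
        omega
      obtain ⟨w0, wi, z0, zi, hb, hφ, hw0, hwi, hz0, hzi⟩ :=
        ih vi (v0 - t • vi) (xi + t • x0) x0 hlt
          (by rw [add_dotProduct, smul_dotProduct, hii, h0i, smul_zero, add_zero])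
          (by simp only [add_dotProduct, dotProduct_sub, smul_dotProduct,
                dotProduct_smul, hi0, hii, h00, h0i, smul_eq_mul]
              ring)
          (by rw [h0i])
          (by rw [dotProduct_sub, dotProduct_smul, h00, h0i, smul_zero, sub_zero])
      have hsubv : Submodule.span ℤ ({vi, v0 - t • vi} : Set (Fin g → ℤ)) ≤
          Submodule.span ℤ ({v0, vi} : Set (Fin g → ℤ)) := by
        rw [Submodule.span_le]
        rintro z (rfl | rfl)
        · exact Submodule.subset_span (by simp)
        · exact sub_mem (Submodule.subset_span (by simp))
            (Submodule.smul_mem _ _ (Submodule.subset_span (by simp)))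
      have hsubx : Submodule.span ℤ ({xi + t • x0, x0} : Set (Fin g → ℤ)) ≤
          Submodule.span ℤ ({x0, xi} : Set (Fin g → ℤ)) := by
        rw [Submodule.span_le]
        rintro z (rfl | rfl)
        · exact add_mem (Submodule.subset_span (by simp))
            (Submodule.smul_mem _ _ (Submodule.subset_span (by simp)))
        · exact Submodule.subset_span (by simp)
      exact ⟨w0, wi, z0, zi, hb, hφ, hsubv hw0, hsubv hwi, hsubx hz0, hsubx hzi⟩

end Lattice

section Lattice2

lemma kill_functional {g k : ℕ} (φ : (Fin g → ℤ) →+ ℤ)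
    (v x : Fin (k+1) → Fin g → ℤ)
    (hb : ∀ i j, x i ⬝ᵥ v j = if i = j then 1 else 0) :
    ∃ v' x' : Fin (k+1) → Fin g → ℤ,
      (∀ i j, x' i ⬝ᵥ v' j = if i = j then 1 else 0) ∧
      (∀ i, v' i ∈ Submodule.span ℤ (Set.range v)) ∧
      (∀ i : Fin (k+1), i ≠ 0 → φ (v' i) = 0) := by
  suffices h : ∀ J : ℕ, ∃ v' x' : Fin (k+1) → Fin g → ℤ,
      (∀ i j, x' i ⬝ᵥ v' j = if i = j then 1 else 0) ∧
      (∀ i, v' i ∈ Submodule.span ℤ (Set.range v)) ∧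
      (∀ i, x' i ∈ Submodule.span ℤ (Set.range x)) ∧
      (∀ i : Fin (k+1), 0 < i.val → i.val ≤ J → φ (v' i) = 0) by
    obtain ⟨v', x', h1, h2, _, h4⟩ := h k
    refine ⟨v', x', h1, h2, fun i hi => h4 i ?_ (Nat.lt_succ_iff.mp i.isLt)⟩
    have : i.val ≠ 0 := fun hc => hi (Fin.ext hc)
    omega
  intro J
  induction J with
  | zero =>
    exact ⟨v, x, hb, fun i => Submodule.subset_span ⟨i, rfl⟩,
      fun i => Submodule.subset_span ⟨i, rfl⟩, fun i h1 h2 => by omega⟩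
  | succ J ihJ =>
    obtain ⟨v', x', hb', hv', hx', hz'⟩ := ihJ
    by_cases hJk : J + 1 ≤ k
    · set ι : Fin (k+1) := ⟨J+1, by omega⟩ with hιdef
      have hι0 : ι ≠ 0 := by
        intro hc
        have := congrArg Fin.val hc
        simp [hιdef] at this
      obtain ⟨w0, wi, z0, zi, ⟨hb1, hb2, hb3, hb4⟩, hφw, hw0, hwi, hz0, hzi⟩ :=
        pair_reduce φ ((φ (v' ι)).natAbs) (v' 0) (v' ι) (x' 0) (x' ι) le_rfl
          (by rw [hb']; simp)
          (by rw [hb', if_neg (Ne.symm hι0)])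
          (by rw [hb', if_neg hι0])
          (by rw [hb']; simp)
      set v'' := Function.update (Function.update v' 0 w0) ι wi with hv''
      set x'' := Function.update (Function.update x' 0 z0) ι zi with hx''
      have hveval : ∀ j, v'' j = if j = ι then wi else if j = 0 then w0 else v' j := by
        intro j
        simp [hv'', Function.update_apply]
      have hxeval : ∀ j, x'' j = if j = ι then zi else if j = 0 then z0 else x' j := by
        intro j
        simp [hx'', Function.update_apply]
      have hsubv : Submodule.span ℤ ({v' 0, v' ι} : Set (Fin g → ℤ)) ≤
          Submodule.span ℤ (Set.range v) := by
        rw [Submodule.span_le]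
        rintro z (rfl | rfl)
        · exact hv' 0
        · exact hv' ι
      have hsubx : Submodule.span ℤ ({x' 0, x' ι} : Set (Fin g → ℤ)) ≤
          Submodule.span ℤ (Set.range x) := by
        rw [Submodule.span_le]
        rintro z (rfl | rfl)
        · exact hx' 0
        · exact hx' ι
      refine ⟨v'', x'', ?_, ?_, ?_, ?_⟩
      · intro i j
        rw [hveval, hxeval]
        rcases eq_or_ne i ι with hi | hi <;> rcases eq_or_ne j ι with hj | hj
        · rw [if_pos hi, if_pos hj, hb4, if_pos (hi.trans hj.symm)]
        · rw [if_pos hi, if_neg hj]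
          rcases eq_or_ne j 0 with hj0 | hj0
          · rw [if_pos hj0, hb3, if_neg (show i ≠ j from fun hc => hι0 (by rw [← hi, hc, hj0]))]
          · have e0 : x' 0 ⬝ᵥ v' j = 0 := by rw [hb', if_neg (Ne.symm hj0)]
            have e1 : x' ι ⬝ᵥ v' j = 0 := by rw [hb', if_neg (Ne.symm hj)]
            rw [if_neg hj0, span_pair_dot_left e0 e1 zi hzi,
              if_neg (show i ≠ j from fun hc => hj (hc ▸ hi))]
        · rw [if_neg hi, if_pos hj]
          rcases eq_or_ne i 0 with hi0 | hi0
          · rw [if_pos hi0, hb2, if_neg (show i ≠ j from fun hc => hι0 (by rw [← hj, ← hc, hi0]))]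
          · have e0 : x' i ⬝ᵥ v' 0 = 0 := by rw [hb', if_neg hi0]
            have e1 : x' i ⬝ᵥ v' ι = 0 := by rw [hb', if_neg hi]
            rw [if_neg hi0, span_pair_dot_right e0 e1 wi hwi,
              if_neg (show i ≠ j from fun hc => hi (hc.trans hj))]
        · rw [if_neg hi, if_neg hj]
          rcases eq_or_ne i 0 with hi0 | hi0 <;> rcases eq_or_ne j 0 with hj0 | hj0
          · rw [if_pos hi0, if_pos hj0, hb1, if_pos (hi0.trans hj0.symm)]
          · have e0 : x' 0 ⬝ᵥ v' j = 0 := by rw [hb', if_neg (Ne.symm hj0)]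
            have e1 : x' ι ⬝ᵥ v' j = 0 := by rw [hb', if_neg (Ne.symm hj)]
            rw [if_pos hi0, if_neg hj0, span_pair_dot_left e0 e1 z0 hz0,
              if_neg (show i ≠ j from fun hc => hj0 (hc ▸ hi0))]
          · have e0 : x' i ⬝ᵥ v' 0 = 0 := by rw [hb', if_neg hi0]
            have e1 : x' i ⬝ᵥ v' ι = 0 := by rw [hb', if_neg hi]
            rw [if_neg hi0, if_pos hj0, span_pair_dot_right e0 e1 w0 hw0,
              if_neg (show i ≠ j from fun hc => hi0 (hc.trans hj0))]
          · rw [if_neg hi0, if_neg hj0, hb' i j]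
      · intro i
        rw [hveval i]
        split_ifs
        · exact hsubv hwi
        · exact hsubv hw0
        · exact hv' i
      · intro i
        rw [hxeval i]
        split_ifs
        · exact hsubx hzi
        · exact hsubx hz0
        · exact hx' i
      · intro i h1 h2
        rcases eq_or_ne i ι with hi | hi
        · rw [hveval i, if_pos hi]
          exact hφw
        · have hival : i.val ≠ J + 1 := fun hc => hi (Fin.ext hc)
          have hi0 : i ≠ 0 := by
            intro hc
            rw [hc] at h1
            simp at h1
          rw [hveval i, if_neg hi, if_neg hi0]
          exact hz' i h1 (by omega)
    · refine ⟨v', x', hb', hv', hx', fun i h1 h2 => hz' i h1 (by omega)⟩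

end Lattice2

section Lattice3

lemma exists_biorth_tuple {g : ℕ} :
    ∀ (m : ℕ) (ψ : Fin m → ((Fin g → ℤ) →+ ℤ)) (k : ℕ), k + m ≤ g →
    ∃ v x : Fin k → Fin g → ℤ,
      (∀ i j, x i ⬝ᵥ v j = if i = j then 1 else 0) ∧
      (∀ i l, ψ l (v i) = 0) := by
  intro m
  induction m with
  | zero =>
    intro ψ k hk
    have hk' : k ≤ g := by omega
    refine ⟨fun i => Pi.single (Fin.castLE hk' i) 1,
      fun i => Pi.single (Fin.castLE hk' i) 1, ?_, fun i l => l.elim0⟩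
    intro i j
    simp only [dotProduct, Pi.single_apply]
    rw [Finset.sum_congr rfl (fun l _ => by
      rw [ite_mul, one_mul, zero_mul, ← ite_and])]
    rcases eq_or_ne i j with rfl | hij
    · simp
    · rw [if_neg hij, Finset.sum_eq_zero]
      intro l _
      rw [if_neg]
      rintro ⟨rfl, hc⟩
      exact hij (Fin.castLE_inj.mp hc.symm).symm
  | succ m ih =>
    intro ψ k hk
    obtain ⟨v, x, hb, hkill⟩ := ih (fun l => ψ l.succ) (k+1) (by omega)
    obtain ⟨v', x', hb', hmem, hzero⟩ := kill_functional (ψ 0) v x hb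
    refine ⟨fun i => v' i.succ, fun i => x' i.succ, ?_, ?_⟩
    · intro i j
      rw [hb']
      simp [Fin.succ_inj]
    · intro i l
      refine Fin.cases ?_ ?_ l
      · exact hzero i.succ (Fin.succ_ne_zero i)
      · intro l'
        refine addHom_vanish_on_span (ψ l'.succ) ?_ _ (hmem i.succ)
        rintro w ⟨j, rfl⟩
        exact hkill j l'

end Lattice3

section Lattice4

lemma exists_unimodular_pair {g : ℕ} (u : Fin g → ℤ) (v x : Fin 2 → Fin g → ℤ)
    (hb : ∀ i j, x i ⬝ᵥ v j = if i = j then 1 else 0) :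
    ∃ X Y : Fin g → ℤ, X ⬝ᵥ u = 0 ∧ X ⬝ᵥ Y = 1 ∧
      Y ∈ Submodule.span ℤ ({v 0, v 1} : Set (Fin g → ℤ)) := by
  set A : ℤ := x 0 ⬝ᵥ u with hA
  set B : ℤ := x 1 ⬝ᵥ u with hB
  by_cases hG : Int.gcd A B = 0
  · obtain ⟨hA0, hB0⟩ := Int.gcd_eq_zero_iff.mp hG
    exact ⟨x 0, v 0, hA0, by rw [hb]; simp, Submodule.subset_span (by simp)⟩
  · have hGpos : 0 < Int.gcd A B := Nat.pos_of_ne_zero hG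
    set G : ℤ := (Int.gcd A B : ℤ) with hGdef
    have hGA : G ∣ A := Int.gcd_dvd_left A B
    have hGB : G ∣ B := Int.gcd_dvd_right A B
    have hco : IsCoprime (A / G) (B / G) := by
      rw [Int.isCoprime_iff_gcd_eq_one]
      exact Int.gcd_div_gcd_div_gcd hGpos
    obtain ⟨p, q, hpq⟩ := hco
    refine ⟨(B / G) • x 0 - (A / G) • x 1, q • v 0 + (-p) • v 1, ?_, ?_, ?_⟩
    · obtain ⟨A', hA'⟩ := hGA
      obtain ⟨B', hB'⟩ := hGB
      have hGne : G ≠ 0 := by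
        simp only [hGdef]
        exact_mod_cast hG
      have eA : A / G = A' := by rw [hA', Int.mul_ediv_cancel_left _ hGne]
      have eB : B / G = B' := by rw [hB', Int.mul_ediv_cancel_left _ hGne]
      rw [sub_dotProduct, smul_dotProduct, smul_dotProduct, ← hA, ← hB,
        eA, eB, hA', hB', smul_eq_mul, smul_eq_mul]
      ring
    · rw [sub_dotProduct, smul_dotProduct, smul_dotProduct, dotProduct_add,
        dotProduct_add, dotProduct_smul, dotProduct_smul, dotProduct_smul,
        dotProduct_smul, hb, hb, hb, hb]
      simp only [smul_eq_mul]
      norm_num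
      linarith [hpq]
    · exact add_mem (Submodule.smul_mem _ _ (Submodule.subset_span (by simp)))
        (Submodule.smul_mem _ _ (Submodule.subset_span (by simp)))

end Lattice4

section WallAuxLemmas

variable {H : Type} [AddCommGroup H] {P : FormParameter H} {C : HPair H}

lemma hom2_sum_apply {A B C' : Type} {ι : Type} [AddCommMonoid A] [AddCommMonoid B]
    [AddCommMonoid C'] (φ : A →+ B →+ C') (t : Finset ι) (f : ι → A) (z : B) :
    φ (∑ i ∈ t, f i) z = ∑ i ∈ t, φ (f i) z := by
  rw [map_sum, AddMonoidHom.finset_sum_apply]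

lemma hom2_zsmul_apply {A B C' : Type} [AddCommGroup A] [AddCommMonoid B]
    [AddCommGroup C'] (φ : A →+ B →+ C') (n : ℤ) (a : A) (z : B) :
    φ (n • a) z = n • φ a z := by
  rw [map_zsmul]
  rfl

lemma WallAux.alphaPos_zero (S : WallAux P C) : S.alphaPos 0 = 0 := by
  have h := S.alphaPos_add 0 0
  have h2 : S.mu 0 0 = 0 := by simp
  rw [add_zero, h2, map_zero, add_zero] at h
  have h3 : S.alphaPos 0 + 0 = S.alphaPos 0 + S.alphaPos 0 := by rw [add_zero, ← h]
  exact (add_left_cancel h3).symm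

lemma WallAux.alphaPos_neg (S : WallAux P C) (y : C.Pos) (hy : S.alphaPos y = 0)
    (hyy : S.mu y y = 0) : S.alphaPos (-y) = 0 := by
  have h := S.alphaPos_add y (-y)
  have h2 : S.mu y (-y) = 0 := by rw [map_neg, hyy, neg_zero]
  rw [add_neg_cancel, S.alphaPos_zero, hy, h2, map_zero, add_zero, zero_add] at h
  exact h.symm

lemma WallAux.alphaPos_zsmul (S : WallAux P C) (y : C.Pos) (hy : S.alphaPos y = 0)
    (hyy : S.mu y y = 0) : ∀ n : ℤ, S.alphaPos (n • y) = 0 := by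
  intro n
  induction n using Int.induction_on with
  | zero => rw [zero_smul]; exact S.alphaPos_zero
  | succ n ihn =>
    have e : ((n : ℤ) + 1) • y = (n : ℤ) • y + y := by rw [add_smul, one_smul]
    have h2 : S.mu ((n : ℤ) • y) y = 0 := by
      rw [hom2_zsmul_apply, hyy, smul_zero]
    rw [e, S.alphaPos_add, ihn, hy, h2, map_zero, add_zero, add_zero]
  | pred n ihn =>
    have e : (-(n : ℤ) - 1) • y = (-(n : ℤ)) • y + (-y) := by
      rw [sub_smul, one_smul, sub_eq_add_neg]
    have h2 : S.mu ((-(n : ℤ)) • y) (-y) = 0 := by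
      rw [hom2_zsmul_apply, map_neg, hyy, neg_zero, smul_zero]
    rw [e, S.alphaPos_add, ihn, S.alphaPos_neg y hy hyy, h2, map_zero, add_zero, add_zero]

lemma WallAux.alphaPos_sum (S : WallAux P C) {ι : Type} [DecidableEq ι] (t : Finset ι)
    (f : ι → C.Pos) (hα : ∀ i, S.alphaPos (f i) = 0)
    (hμ : ∀ i j, S.mu (f i) (f j) = 0) :
    S.alphaPos (∑ i ∈ t, f i) = 0 := by
  induction t using Finset.induction_on with
  | empty => simpa using S.alphaPos_zero
  | insert a t' hx ih =>
    have h2 : S.mu (f a) (∑ i ∈ t', f i) = 0 := by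
      rw [map_sum]
      exact Finset.sum_eq_zero fun i _ => hμ a i
    rw [Finset.sum_insert hx, S.alphaPos_add, ih, hα, h2, map_zero, add_zero, add_zero]

end WallAuxLemmas

section StdOneLemmas

variable {H : Type} [AddCommGroup H]

lemma stdPair_tau_apply {g : ℕ} (x : Fin g → ℤ) (hh : H) :
    (stdPair H g).tau x hh = (0, fun i => x i • hh) := rfl

variable {P : FormParameter H} [AddGroup.FG H]

lemma stdWall_lam_apply {g : ℕ} (x : Fin g → ℤ) (w : (Fin g → ℤ) × (Fin g → H)) :
    (stdWall P g).str.lam x w = ∑ i, x i * w.1 i := rfl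

lemma stdWall_mu_apply {g : ℕ} (w w' : (Fin g → ℤ) × (Fin g → H)) :
    (stdWall P g).str.mu w w' = (∑ i, w'.1 i • w.2 i) + P.eps • ∑ i, w.1 i • w'.2 i := rfl

lemma stdWall_alphaNeg_apply {g : ℕ} (x : Fin g → ℤ) :
    (stdWall P g).str.alphaNeg x = 0 := rfl

lemma stdWall_alphaPos_apply {g : ℕ} (w : (Fin g → ℤ) × (Fin g → H)) :
    (stdWall P g).str.alphaPos w = P.bd (∑ i, w.1 i • w.2 i) := rfl

variable {M : WallForm P}

/-- The distinguished negative element of a morphism `W → M`. -/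
def WallHom.aElt (f : WallHom (stdWall P 1) M) : M.carrier.Neg :=
  f.hom.neg (fun _ => 1)

/-- The distinguished positive element of a morphism `W → M`. -/
def WallHom.bElt (f : WallHom (stdWall P 1) M) : M.carrier.Pos :=
  f.hom.pos (fun _ => 1, 0)

lemma WallHom.neg_eq (f : WallHom (stdWall P 1) M) (z : (stdWall P 1).carrier.Neg) :
    f.hom.neg z = z 0 • f.aElt := by
  have hz : @Eq (Fin 1 → ℤ) z (z 0 • (fun _ => (1 : ℤ))) := by
    funext i
    have hi : i = 0 := Subsingleton.elim i 0
    rw [hi]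
    simp
  exact (congrArg f.hom.neg hz).trans (map_zsmul f.hom.neg (z 0) (fun _ => (1 : ℤ)))

lemma WallHom.pos_eq (f : WallHom (stdWall P 1) M) (w : (stdWall P 1).carrier.Pos) :
    f.hom.pos w = w.1 0 • f.bElt + M.carrier.tau f.aElt (w.2 0) := by
  have hw : @Eq ((Fin 1 → ℤ) × (Fin 1 → H)) w (w.1 0 • ((fun _ => (1 : ℤ)), (0 : Fin 1 → H))
      + (stdPair H 1).tau (fun _ => 1) (w.2 0)) := by
    rw [stdPair_tau_apply]
    refine Prod.ext ?_ ?_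
    · funext i
      have hi : i = 0 := Subsingleton.elim i 0
      rw [hi]
      simp
    · funext i
      have hi : i = 0 := Subsingleton.elim i 0
      rw [hi]
      simp
  refine (congrArg f.hom.pos hw).trans ((map_add f.hom.pos _ _).trans ?_)
  exact congrArg₂ (· + ·) (map_zsmul f.hom.pos _ _) (f.hom.comm (fun _ => 1) (w.2 0))

lemma WallHom.lam_ab (f : WallHom (stdWall P 1) M) :
    M.str.lam f.aElt f.bElt = 1 := by
  have h := f.isWall.1 (fun _ => 1) ((fun _ => 1), 0)
  rw [stdWall_lam_apply] at h
  simp at h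
  exact h

lemma WallHom.alphaNeg_a (f : WallHom (stdWall P 1) M) :
    M.str.alphaNeg f.aElt = 0 :=
  (f.isWall.2.2.1 (fun _ => 1)).trans (stdWall_alphaNeg_apply _)

lemma WallHom.alphaPos_b (f : WallHom (stdWall P 1) M) :
    M.str.alphaPos f.bElt = 0 := by
  have h := f.isWall.2.2.2 ((fun _ => 1), 0)
  rw [stdWall_alphaPos_apply] at h
  simp at h
  exact h

lemma WallHom.mu_bb (f : WallHom (stdWall P 1) M) :
    M.str.mu f.bElt f.bElt = 0 := by
  have h := f.isWall.2.1 ((fun _ => 1), 0) ((fun _ => 1), 0)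
  rw [stdWall_mu_apply] at h
  simp at h
  exact h

end StdOneLemmas


section OrthCriterion

variable {H : Type} [AddCommGroup H] [AddGroup.FG H] {P : FormParameter H} {M : WallForm P}

lemma orthogonalIn_of_facts (f1 f2 : WallHom (stdWall P 1) M)
    (h12 : M.str.lam f1.aElt f2.bElt = 0)
    (h21 : M.str.lam f2.aElt f1.bElt = 0)
    (hmu : M.str.mu f1.bElt f2.bElt = 0) :
    OrthogonalIn M.str f1.hom.rangeSub f2.hom.rangeSub := by
  have hmu' : M.str.mu f2.bElt f1.bElt = 0 := by
    rw [M.str.mu_symm, hmu, smul_zero]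
  have key_lam : ∀ (g1 g2 : WallHom (stdWall P 1) M),
      M.str.lam g1.aElt g2.bElt = 0 →
      ∀ z ∈ g1.hom.rangeSub.neg, ∀ w ∈ g2.hom.rangeSub.pos, M.str.lam z w = 0 := by
    intro g1 g2 hl z hz w hw
    obtain ⟨p, rfl⟩ := hz
    obtain ⟨q, rfl⟩ := hw
    rw [g1.neg_eq, g2.pos_eq,
      map_add (M.str.lam (p 0 • g1.aElt)), map_zsmul (M.str.lam (p 0 • g1.aElt)),
      M.str.lam_tau, hom2_zsmul_apply, hl, smul_zero, smul_zero, add_zero]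
  have key_mu : ∀ (g1 g2 : WallHom (stdWall P 1) M),
      M.str.lam g1.aElt g2.bElt = 0 → M.str.lam g2.aElt g1.bElt = 0 →
      M.str.mu g1.bElt g2.bElt = 0 →
      ∀ z ∈ g1.hom.rangeSub.pos, ∀ w ∈ g2.hom.rangeSub.pos, M.str.mu z w = 0 := by
    intro g1 g2 hl12 hl21 hm z hz w hw
    obtain ⟨p, rfl⟩ := hz
    obtain ⟨q, rfl⟩ := hw
    rw [g1.pos_eq, g2.pos_eq]
    have e3 : M.str.lam g1.aElt (q.1 0 • g2.bElt + M.carrier.tau g2.aElt (q.2 0)) = 0 := by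
      rw [map_add, map_zsmul, hl12, M.str.lam_tau, smul_zero, add_zero]
    have e1 : M.str.mu (p.1 0 • g1.bElt) (q.1 0 • g2.bElt) = 0 := by
      rw [map_zsmul (M.str.mu (p.1 0 • g1.bElt)), hom2_zsmul_apply, hm, smul_zero, smul_zero]
    have e2 : M.str.mu (p.1 0 • g1.bElt) (M.carrier.tau g2.aElt (q.2 0)) = 0 := by
      rw [M.str.mu_symm, M.str.mu_tau, map_zsmul, hl21, smul_zero, zero_smul, smul_zero]
    rw [map_add M.str.mu (p.1 0 • g1.bElt) (M.carrier.tau g1.aElt (p.2 0)),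
      AddMonoidHom.add_apply, M.str.mu_tau, e3, zero_smul, add_zero,
      map_add (M.str.mu (p.1 0 • g1.bElt)), e1, e2, add_zero]
  have inf_neg : f1.hom.rangeSub.neg ⊓ f2.hom.rangeSub.neg = ⊥ := by
    rw [AddSubgroup.eq_bot_iff_forall]
    intro z hz
    rw [AddSubgroup.mem_inf] at hz
    obtain ⟨⟨p, rfl⟩, ⟨q, hq⟩⟩ := hz
    have c1 : M.str.lam (f1.hom.neg p) f1.bElt = p 0 := by
      rw [f1.neg_eq, hom2_zsmul_apply, f1.lam_ab, smul_eq_mul, mul_one]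
    have c2 : M.str.lam (f1.hom.neg p) f1.bElt = 0 := by
      rw [← hq, f2.neg_eq, hom2_zsmul_apply, h21, smul_zero]
    rw [f1.neg_eq, show p 0 = 0 from by rw [← c1, c2], zero_smul]
  have inf_pos : f1.hom.rangeSub.pos ⊓ f2.hom.rangeSub.pos = ⊥ := by
    rw [AddSubgroup.eq_bot_iff_forall]
    intro z hz
    rw [AddSubgroup.mem_inf] at hz
    obtain ⟨⟨p, rfl⟩, ⟨q, hq⟩⟩ := hz
    have c1 : M.str.lam f1.aElt (f1.hom.pos p) = p.1 0 := by
      rw [f1.pos_eq, map_add, map_zsmul, f1.lam_ab, M.str.lam_tau, add_zero,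
        smul_eq_mul, mul_one]
    have c2 : M.str.lam f1.aElt (f1.hom.pos p) = 0 := by
      rw [← hq, f2.pos_eq, map_add, map_zsmul, h12, M.str.lam_tau, smul_zero, add_zero]
    have hp0 : p.1 0 = 0 := by rw [← c1, c2]
    have c3 : M.str.mu (f1.hom.pos p) f1.bElt = p.2 0 := by
      rw [f1.pos_eq, hp0, zero_smul, zero_add, M.str.mu_tau, f1.lam_ab, one_smul]
    have c4 : M.str.mu (f1.hom.pos p) f1.bElt = 0 := by
      rw [← hq, f2.pos_eq, map_add M.str.mu (q.1 0 • f2.bElt) (M.carrier.tau f2.aElt (q.2 0)),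
        AddMonoidHom.add_apply, hom2_zsmul_apply, hmu', smul_zero, M.str.mu_tau, h21,
        zero_smul, add_zero]
    have hκ : p.2 0 = 0 := by rw [← c3, c4]
    rw [f1.pos_eq, hp0, hκ, zero_smul, zero_add, map_zero]
  refine ⟨inf_neg, inf_pos, ?_, ?_, ?_, ?_⟩
  · exact fun z hz w hw => key_lam f1 f2 h12 z hz w hw
  · exact fun z hz => ⟨fun v hv => key_lam f2 f1 h21 v hv z hz,
      fun w hw => key_mu f1 f2 h12 h21 hmu z hz w hw⟩
  · exact fun z hz w hw => key_lam f2 f1 h21 z hz w hw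
  · exact fun z hz => ⟨fun v hv => key_lam f1 f2 h12 v hv z hz,
      fun w hw => key_mu f2 f1 h21 h12 hmu' z hz w hw⟩

end OrthCriterion


section Surj

lemma exists_surj_dlen (H : Type) [AddCommGroup H] [AddGroup.FG H] :
    ∃ φ : (Fin (dlen H) → ℤ) →+ H, Function.Surjective φ := by
  have hne : { k : ℕ | ∃ φ : (Fin k → ℤ) →+ H, Function.Surjective φ }.Nonempty := by
    haveI : Module.Finite ℤ H := Module.Finite.iff_addGroup_fg.mpr ‹AddGroup.FG H›
    obtain ⟨n, f, hf⟩ := Module.Finite.exists_fin' ℤ H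
    exact ⟨n, f.toAddMonoidHom, hf⟩
  exact Nat.sInf_mem hne

lemma single_dot_single {g : ℕ} (i j : Fin g) :
    (∑ l, (Pi.single i 1 : Fin g → ℤ) l * (Pi.single j 1 : Fin g → ℤ) l) = if i = j then 1 else 0 := by
  simp only [Pi.single_apply]
  rw [Finset.sum_congr rfl (fun l _ => by
    rw [ite_mul, one_mul, zero_mul, ← ite_and])]
  rcases eq_or_ne i j with rfl | hij
  · simp
  · rw [if_neg hij, Finset.sum_eq_zero]
    intro l _
    rw [if_neg]
    rintro ⟨h1, h2⟩
    exact hij (h1.symm.trans h2)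

lemma hom2_add_apply {A B C' : Type} [AddCommMonoid A] [AddCommMonoid B]
    [AddCommMonoid C'] (φ : A →+ B →+ C') (a a' : A) (z : B) :
    φ (a + a') z = φ a z + φ a' z := by
  rw [map_add, AddMonoidHom.add_apply]

end Surj


section CoreConstruction

variable {H : Type} [AddCommGroup H] [AddGroup.FG H] {P : FormParameter H}

lemma core_construction (M : WallForm P) (g : ℕ)
    (A : Fin g → M.carrier.Neg) (Bv : Fin g → M.carrier.Pos)
    (aH a0 : M.carrier.Neg) (bH b0 : M.carrier.Pos)
    (hAB : ∀ i j, M.str.lam (A i) (Bv j) = if i = j then 1 else 0)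
    (hBB : ∀ i j, M.str.mu (Bv i) (Bv j) = 0)
    (hαA : ∀ i, M.str.alphaNeg (A i) = 0)
    (hαB : ∀ i, M.str.alphaPos (Bv i) = 0)
    (hab : M.str.lam aH bH = 1)
    (hαa : M.str.alphaNeg aH = 0)
    (X Y : Fin g → ℤ)
    (hXY : (∑ i, X i * Y i) = 1)
    (hXu : (∑ i, X i * (M.str.lam (A i) b0 - M.str.lam aH b0 * M.str.lam (A i) bH)) = 0)
    (hYd : (∑ i, Y i * M.str.lam aH (Bv i)) = 0)
    (hYd0 : (∑ i, Y i * M.str.lam a0 (Bv i)) = 0)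
    (hYw : (∑ i, Y i • (M.str.mu (Bv i) b0 - M.str.lam aH b0 • M.str.mu (Bv i) bH)) = 0) :
    ∃ (aE : M.carrier.Neg) (bE : M.carrier.Pos),
      M.str.lam aE bE = 1 ∧ M.str.alphaNeg aE = 0 ∧ M.str.alphaPos bE = 0 ∧
      M.str.lam aE bH = 0 ∧ M.str.lam aE b0 = 0 ∧
      M.str.lam aH bE = 0 ∧ M.str.lam a0 bE = 0 ∧
      M.str.mu bE bH = 0 ∧ M.str.mu bE b0 = 0 := by
  classical
  set sc : ℤ := M.str.lam aH b0 with hsc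
  set r : ℤ := -(∑ i, X i * M.str.lam (A i) bH) with hrdef
  set kH : H := -(∑ i, Y i • M.str.mu (Bv i) bH) with hkH
  set aE : M.carrier.Neg := (∑ i, X i • A i) + r • aH with haE
  set b2 : M.carrier.Pos := ∑ i, Y i • Bv i with hb2
  set bE : M.carrier.Pos := b2 + M.carrier.tau aH kH with hbE
  have lam_aE : ∀ z, M.str.lam aE z
      = (∑ i, X i * M.str.lam (A i) z) + r * M.str.lam aH z := by
    intro z
    rw [haE, hom2_add_apply, hom2_sum_apply, hom2_zsmul_apply, smul_eq_mul]
    congr 1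
    exact Finset.sum_congr rfl fun i _ => by rw [hom2_zsmul_apply, smul_eq_mul]
  have lam_b2 : ∀ aa, M.str.lam aa b2 = ∑ j, Y j * M.str.lam aa (Bv j) := by
    intro aa
    rw [hb2, map_sum]
    exact Finset.sum_congr rfl fun j _ => by rw [map_zsmul, smul_eq_mul]
  have mu_b2 : ∀ z, M.str.mu b2 z = ∑ j, Y j • M.str.mu (Bv j) z := by
    intro z
    rw [hb2, hom2_sum_apply]
    exact Finset.sum_congr rfl fun j _ => by rw [hom2_zsmul_apply]
  have lam_bE : ∀ aa, M.str.lam aa bE = M.str.lam aa b2 := by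
    intro aa
    rw [hbE, map_add, M.str.lam_tau, add_zero]
  have lam_aH_b2 : M.str.lam aH b2 = 0 := by rw [lam_b2]; exact hYd
  have lam_a0_b2 : M.str.lam a0 b2 = 0 := by rw [lam_b2]; exact hYd0
  have G4 : M.str.lam aE bH = 0 := by
    rw [lam_aE, hab, mul_one, hrdef]
    ring
  have G5 : M.str.lam aE b0 = 0 := by
    rw [lam_aE]
    have e1 : (∑ i, X i * (M.str.lam (A i) b0 - sc * M.str.lam (A i) bH))
        = (∑ i, X i * M.str.lam (A i) b0) - sc * (∑ i, X i * M.str.lam (A i) bH) := by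
      rw [Finset.mul_sum, ← Finset.sum_sub_distrib]
      exact Finset.sum_congr rfl fun i _ => by ring
    rw [e1] at hXu
    rw [hrdef]
    linear_combination hXu
  have G6 : M.str.lam aH bE = 0 := by rw [lam_bE]; exact lam_aH_b2
  have G7 : M.str.lam a0 bE = 0 := by rw [lam_bE]; exact lam_a0_b2
  have G1 : M.str.lam aE bE = 1 := by
    rw [lam_bE, lam_aE, lam_aH_b2, mul_zero, add_zero]
    have e : ∀ i, M.str.lam (A i) b2 = Y i := by
      intro i
      rw [lam_b2]
      rw [Finset.sum_congr rfl fun j _ => by rw [hAB i j]]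
      rw [Finset.sum_congr rfl (fun j _ => by rw [mul_ite, mul_one, mul_zero])]
      rw [Finset.sum_ite_eq]
      simp
    rw [Finset.sum_congr rfl fun i _ => by rw [e i]]
    exact hXY
  have G2 : M.str.alphaNeg aE = 0 := by
    rw [haE, map_add, map_zsmul, hαa, smul_zero, add_zero, map_sum]
    refine Finset.sum_eq_zero fun i _ => ?_
    rw [map_zsmul, hαA, smul_zero]
  have G8 : M.str.mu bE bH = 0 := by
    rw [hbE, hom2_add_apply, mu_b2, M.str.mu_tau, hab, one_smul, hkH]
    exact add_neg_cancel _
  have G9 : M.str.mu bE b0 = 0 := by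
    rw [hbE, hom2_add_apply, mu_b2, M.str.mu_tau, ← hsc, hkH, smul_neg]
    have e1 : (∑ i, Y i • (M.str.mu (Bv i) b0 - sc • M.str.mu (Bv i) bH))
        = (∑ i, Y i • M.str.mu (Bv i) b0) - sc • (∑ i, Y i • M.str.mu (Bv i) bH) := by
      rw [Finset.smul_sum, ← Finset.sum_sub_distrib]
      refine Finset.sum_congr rfl fun i _ => ?_
      rw [smul_sub, smul_comm]
    rw [e1] at hYw
    rw [← sub_eq_add_neg]
    exact hYw
  have G3 : M.str.alphaPos bE = 0 := by
    have hb2α : M.str.alphaPos b2 = 0 := by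
      rw [hb2]
      refine M.str.alphaPos_sum Finset.univ _ (fun i => ?_) (fun i j => ?_)
      · exact M.str.alphaPos_zsmul (Bv i) (hαB i) (hBB i i) (Y i)
      · rw [hom2_zsmul_apply, map_zsmul, hBB, smul_zero, smul_zero]
    have hτ : M.str.alphaPos (M.carrier.tau aH kH) = 0 := by
      rw [M.str.alphaPos_tau, hαa, map_zero]
      simp
    have hμcross : M.str.mu b2 (M.carrier.tau aH kH) = 0 := by
      rw [M.str.mu_symm, M.str.mu_tau, lam_aH_b2, zero_smul, smul_zero]
    rw [hbE, M.str.alphaPos_add, hb2α, hτ, hμcross, map_zero, add_zero, add_zero]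
  exact ⟨aE, bE, G1, G2, G3, G4, G5, G6, G7, G8, G9⟩

end CoreConstruction


section HomBuilder

variable {H : Type} [AddCommGroup H] [AddGroup.FG H] {P : FormParameter H}

lemma wallHom_of_pair {M : WallForm P} (aE : M.carrier.Neg) (bE : M.carrier.Pos)
    (h1 : M.str.lam aE bE = 1) (h2 : M.str.alphaNeg aE = 0)
    (h3 : M.str.alphaPos bE = 0) :
    ∃ f : WallHom (stdWall P 1) M, f.aElt = aE ∧ f.bElt = bE := by
  have hbb : M.str.mu bE bE = 0 := by rw [M.str.mu_diag, h3, map_zero]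
  set negH : (Fin 1 → ℤ) →+ M.carrier.Neg :=
    (zmultiplesHom M.carrier.Neg aE).comp (Pi.evalAddMonoidHom (fun _ : Fin 1 => ℤ) 0)
    with hnegH
  set posH : ((Fin 1 → ℤ) × (Fin 1 → H)) →+ M.carrier.Pos :=
    ((zmultiplesHom M.carrier.Pos bE).comp
      ((Pi.evalAddMonoidHom (fun _ : Fin 1 => ℤ) 0).comp
        (AddMonoidHom.fst (Fin 1 → ℤ) (Fin 1 → H))))
    + ((M.carrier.tau aE).comp
      ((Pi.evalAddMonoidHom (fun _ : Fin 1 => H) 0).comp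
        (AddMonoidHom.snd (Fin 1 → ℤ) (Fin 1 → H)))) with hposH
  have negH_apply : ∀ z : Fin 1 → ℤ, negH z = z 0 • aE := fun z => rfl
  have posH_apply : ∀ w : (Fin 1 → ℤ) × (Fin 1 → H),
      posH w = w.1 0 • bE + M.carrier.tau aE (w.2 0) := fun w => rfl
  have hcomm : ∀ (z : Fin 1 → ℤ) (hh : H),
      posH ((stdWall P 1).carrier.tau z hh) = M.carrier.tau (negH z) hh := by
    intro z hh
    have e : (stdWall P 1).carrier.tau z hh
        = ((0 : Fin 1 → ℤ), fun i => z i • hh) := rfl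
    rw [e, posH_apply, negH_apply]
    simp only [Pi.zero_apply, zero_smul, zero_add]
    rw [map_zsmul, hom2_zsmul_apply]
  have elamq : ∀ w : (Fin 1 → ℤ) × (Fin 1 → H),
      M.str.lam aE (w.1 0 • bE + M.carrier.tau aE (w.2 0)) = w.1 0 := by
    intro w
    rw [map_add, map_zsmul, h1, M.str.lam_tau, add_zero, smul_eq_mul, mul_one]
  have ecross : ∀ (n : ℤ) (κ : H), M.str.mu (n • bE) (M.carrier.tau aE κ)
      = P.eps • (n • κ) := by
    intro n κ
    rw [M.str.mu_symm, M.str.mu_tau, map_zsmul, h1, smul_eq_mul, mul_one]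
  have l1 : ∀ x y, M.str.lam (negH x) (posH y) = (stdWall P 1).str.lam x y := by
    intro x y
    rw [negH_apply, posH_apply, stdWall_lam_apply, Fin.sum_univ_one]
    rw [map_add (M.str.lam (x 0 • aE)), map_zsmul (M.str.lam (x 0 • aE)),
      M.str.lam_tau, add_zero, hom2_zsmul_apply, h1]
    simp only [smul_eq_mul, mul_one]
    ring
  have l2 : ∀ y y', M.str.mu (posH y) (posH y') = (stdWall P 1).str.mu y y' := by
    intro y y'
    rw [posH_apply, posH_apply, stdWall_mu_apply, Fin.sum_univ_one, Fin.sum_univ_one]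
    have e1 : M.str.mu (y.1 0 • bE) (y'.1 0 • bE) = 0 := by
      rw [map_zsmul (M.str.mu (y.1 0 • bE)), hom2_zsmul_apply, hbb, smul_zero, smul_zero]
    have e3 : M.str.mu (M.carrier.tau aE (y.2 0))
        (y'.1 0 • bE + M.carrier.tau aE (y'.2 0)) = y'.1 0 • y.2 0 := by
      rw [M.str.mu_tau, elamq y']
    rw [hom2_add_apply, e3, map_add (M.str.mu (y.1 0 • bE)), e1, ecross, zero_add]
    exact add_comm _ _
  have l3 : ∀ x, M.str.alphaNeg (negH x) = (stdWall P 1).str.alphaNeg x := by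
    intro x
    rw [negH_apply, map_zsmul, h2, smul_zero, stdWall_alphaNeg_apply]
  have l4 : ∀ y, M.str.alphaPos (posH y) = (stdWall P 1).str.alphaPos y := by
    intro y
    rw [posH_apply, stdWall_alphaPos_apply, Fin.sum_univ_one]
    have hzs : M.str.alphaPos (y.1 0 • bE) = 0 := M.str.alphaPos_zsmul bE h3 hbb (y.1 0)
    have hτ : M.str.alphaPos (M.carrier.tau aE (y.2 0)) = 0 := by
      rw [M.str.alphaPos_tau, h2, map_zero]
      simp
    rw [M.str.alphaPos_add, hzs, hτ, ecross, zero_add, zero_add]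
    exact P.bd_eps _
  refine ⟨⟨⟨negH, posH, hcomm⟩, l1, l2, l3, l4⟩, ?_, ?_⟩
  · show negH (fun _ => 1) = aE
    rw [negH_apply]
    simp
  · show posH (fun _ => 1, 0) = bE
    rw [posH_apply]
    simp

end HomBuilder

/-- If `r(M) ≥ 4 + d(H)` then any two morphisms
`h, h₀ : W → M` admit a morphism `h' : W → M` whose image is orthogonal to
the images of both, i.e. `h` and `h₀` are joined by a path of length 2 in
`L(M)`. -/
theorem statement_18 {H : Type} [AddCommGroup H] [AddGroup.FG H]
    (P : FormParameter H) (M : WallForm P) (hr : rankGE M (4 + dlen H))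
    (h h₀ : WallHom (stdWall P 1) M) :
    ∃ h' : WallHom (stdWall P 1) M,
      OrthogonalIn M.str h'.hom.rangeSub h.hom.rangeSub ∧
      OrthogonalIn M.str h'.hom.rangeSub h₀.hom.rangeSub := by
    classical
  obtain ⟨F⟩ := hr
  obtain ⟨ψH, hψH⟩ := exists_surj_dlen H
  set A : Fin (4 + dlen H) → M.carrier.Neg :=
    fun i => F.hom.neg (Pi.single i 1) with hA
  set Bv : Fin (4 + dlen H) → M.carrier.Pos :=
    fun i => F.hom.pos (Pi.single i 1, 0) with hBv
  have hAB : ∀ i j, M.str.lam (A i) (Bv j) = if i = j then 1 else 0 := by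
    intro i j
    have hw := F.isWall.1 (Pi.single i 1) (Pi.single j 1, 0)
    rw [stdWall_lam_apply] at hw
    exact hw.trans (single_dot_single i j)
  have hBB : ∀ i j, M.str.mu (Bv i) (Bv j) = 0 := by
    intro i j
    have hw := F.isWall.2.1 (Pi.single i 1, 0) (Pi.single j 1, 0)
    rw [stdWall_mu_apply] at hw
    simpa using hw
  have hαA : ∀ i, M.str.alphaNeg (A i) = 0 := fun i =>
    (F.isWall.2.2.1 (Pi.single i 1)).trans (stdWall_alphaNeg_apply _)
  have hαB : ∀ i, M.str.alphaPos (Bv i) = 0 := by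
    intro i
    have hw := F.isWall.2.2.2 (Pi.single i 1, 0)
    rw [stdWall_alphaPos_apply] at hw
    simpa using hw
  choose Wl hWl using fun i =>
    hψH (M.str.mu (Bv i) h₀.bElt - M.str.lam h.aElt h₀.bElt • M.str.mu (Bv i) h.bElt)
  set ψ : Fin (dlen H + 2) → ((Fin (4 + dlen H) → ℤ) →+ ℤ) :=
    Fin.cons (dotHom (fun i => M.str.lam h.aElt (Bv i)))
      (Fin.cons (dotHom (fun i => M.str.lam h₀.aElt (Bv i)))
        (fun l => dotHom (fun i => Wl i l))) with hψdef
  obtain ⟨v, xx, hbio, hkill⟩ := exists_biorth_tuple (dlen H + 2) ψ 2 (by omega)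
  obtain ⟨X, Y, hXu, hXY', hYspan⟩ := exists_unimodular_pair
    (fun i => M.str.lam (A i) h₀.bElt
      - M.str.lam h.aElt h₀.bElt * M.str.lam (A i) h.bElt) v xx hbio
  have hkillspan : ∀ l, ψ l Y = 0 := by
    intro l
    refine addHom_vanish_on_span (ψ l) ?_ Y hYspan
    rintro z (rfl | rfl)
    · exact hkill 0 l
    · exact hkill 1 l
  have hYd : (∑ i, Y i * M.str.lam h.aElt (Bv i)) = 0 := by
    have hk := hkillspan 0
    rw [hψdef, Fin.cons_zero] at hk
    simpa [dotProduct] using hk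
  have hYd0 : (∑ i, Y i * M.str.lam h₀.aElt (Bv i)) = 0 := by
    have hk := hkillspan 1
    rw [hψdef, show (1 : Fin (dlen H + 2)) = Fin.succ 0 from rfl,
      Fin.cons_succ, Fin.cons_zero] at hk
    simpa [dotProduct] using hk
  have hrow : ∀ l : Fin (dlen H), (∑ i, Y i * Wl i l) = 0 := by
    intro l
    have hk := hkillspan l.succ.succ
    rw [hψdef, Fin.cons_succ, Fin.cons_succ] at hk
    simpa [dotProduct] using hk
  have hYw : (∑ i, Y i • (M.str.mu (Bv i) h₀.bElt
      - M.str.lam h.aElt h₀.bElt • M.str.mu (Bv i) h.bElt)) = 0 := by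
    have hz : (∑ i, Y i • Wl i) = (0 : Fin (dlen H) → ℤ) := by
      funext l
      rw [Finset.sum_apply]
      simpa [smul_eq_mul] using hrow l
    calc (∑ i, Y i • (M.str.mu (Bv i) h₀.bElt
        - M.str.lam h.aElt h₀.bElt • M.str.mu (Bv i) h.bElt))
        = ∑ i, Y i • ψH (Wl i) :=
          Finset.sum_congr rfl fun i _ => by rw [hWl]
      _ = ∑ i, ψH (Y i • Wl i) :=
          Finset.sum_congr rfl fun i _ => (map_zsmul ψH _ _).symm
      _ = ψH (∑ i, Y i • Wl i) := (map_sum ψH _ _).symm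
      _ = 0 := by rw [hz, map_zero]
  obtain ⟨aE, bE, G1, G2, G3, G4, G5, G6, G7, G8, G9⟩ :=
    core_construction M (4 + dlen H) A Bv h.aElt h₀.aElt h.bElt h₀.bElt
      hAB hBB hαA hαB h.lam_ab h.alphaNeg_a X Y
      (by simpa [dotProduct] using hXY')
      (by simpa [dotProduct] using hXu)
      hYd hYd0 hYw
  obtain ⟨h', haE, hbE⟩ := wallHom_of_pair aE bE G1 G2 G3
  refine ⟨h', orthogonalIn_of_facts h' h ?_ ?_ ?_,
    orthogonalIn_of_facts h' h₀ ?_ ?_ ?_⟩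
  · rw [haE]; exact G4
  · rw [hbE]; exact G6
  · rw [hbE]; exact G8
  · rw [haE]; exact G5
  · rw [hbE]; exact G7
  · rw [hbE]; exact G9
end
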